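/- arXiv:1608.04637 — 2 statements merged into one kernel-verified Lean document; each statement's English description precedes it below -/
import Mathlib

section
/- Let X be an irreducible, aperiodic, stationary first-order Markov chain on the finite alphabet 𝒳, g: 𝒳 → 𝒴, and Y_n := g(X_n). Then for every k ≥ 1, Δ_L^k(X, g) ≥ Δ_L^{k+1}(X, g), and lim_{k→∞} Δ_L^k(X, g) = 0. -/
open Filter

section MarkovAggregation

variable {𝒳 : Type*} {𝒴 : Type*} [Fintype 𝒳] [DecidableEq 𝒳] [Fintype 𝒴] [DecidableEq 𝒴]

/-- Shannon entropy of a probability mass function on a finite set. -/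
noncomputable def entPMF {α : Type*} [Fintype α] (p : α → ℝ) : ℝ :=
  ∑ a : α, Real.negMulLog (p a)

/-- Marginal of a joint pmf on the first component. -/
noncomputable def margFst {α β : Type*} [Fintype β] (p : α × β → ℝ) : α → ℝ :=
  fun a => ∑ b : β, p (a, b)

/-- Marginal of a joint pmf on the second component. -/
noncomputable def margSnd {α β : Type*} [Fintype α] (p : α × β → ℝ) : β → ℝ :=
  fun b => ∑ a : α, p (a, b)

/-- Conditional Shannon entropy H(A | B) of a joint pmf `p` of the pair (A, B). -/
noncomputable def condEntPMF {α β : Type*} [Fintype α] [Fintype β] (p : α × β → ℝ) : ℝ :=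
  entPMF p - entPMF (margSnd p)

/-- Mutual information I(A ; B) of a joint pmf `p` of the pair (A, B). -/
noncomputable def mutInfPMF {α β : Type*} [Fintype α] [Fintype β] (p : α × β → ℝ) : ℝ :=
  entPMF (margFst p) + entPMF (margSnd p) - entPMF p

/-- Probability that a first-order Markov chain with initial distribution `π` and transition
matrix `P` emits the path (x_0, ..., x_{n-1}). -/
noncomputable def xPath (π : 𝒳 → ℝ) (P : Matrix 𝒳 𝒳 ℝ) (n : ℕ) (x : Fin n → 𝒳) : ℝ :=
  (if h : 0 < n then π (x ⟨0, h⟩) else 1) *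
    ∏ i : Fin n, if h : i.val + 1 < n then P (x i) (x ⟨i.val + 1, h⟩) else 1

/-- Probability that the projection Y_n = g(X_n) emits the path (y_0, ..., y_{n-1}). -/
noncomputable def yPath (π : 𝒳 → ℝ) (P : Matrix 𝒳 𝒳 ℝ) (g : 𝒳 → 𝒴) (n : ℕ)
    (y : Fin n → 𝒴) : ℝ :=
  ∑ x : Fin n → 𝒳, if ∀ i, g (x i) = y i then xPath π P n x else 0

/-- Joint probability of (X_1, (Y_2, ..., Y_{m+1})). -/
noncomputable def xyPath (π : 𝒳 → ℝ) (P : Matrix 𝒳 𝒳 ℝ) (g : 𝒳 → 𝒴) (m : ℕ)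
    (x₀ : 𝒳) (y : Fin m → 𝒴) : ℝ :=
  ∑ x : Fin (m + 1) → 𝒳,
    if x 0 = x₀ ∧ ∀ i : Fin m, g (x i.succ) = y i then xPath π P (m + 1) x else 0

/-- A matrix is primitive iff some power (and all larger powers) of it is entrywise positive;
for a stochastic matrix this is equivalent to being irreducible and aperiodic. -/
def PrimitiveMatrix (P : Matrix 𝒳 𝒳 ℝ) : Prop :=
  ∃ N : ℕ, ∀ n : ℕ, N ≤ n → ∀ i j : 𝒳, 0 < (P ^ n) i j

/-- A Markov chain with transition matrix `P` is `k`-lumpable w.r.t. `g` iff for every initial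
distribution `π` the projected process is a `k`-th order Markov chain whose transition matrix `Q`
does not depend on `π`. -/
def Lumpable (P : Matrix 𝒳 𝒳 ℝ) (g : 𝒳 → 𝒴) (k : ℕ) : Prop :=
  ∃ Q : (Fin k → 𝒴) → 𝒴 → ℝ,
    ∀ π : 𝒳 → ℝ, (∀ x, 0 ≤ π x) → (∑ x, π x = 1) →
      ∀ n : ℕ, ∀ hn : k ≤ n, ∀ y : Fin n → 𝒴, ∀ j : 𝒴,
        yPath π P g (n + 1) (Fin.snoc y j) =
          yPath π P g n y *
            Q (fun i : Fin k => y ⟨n - k + i.val, by have := i.isLt; omega⟩) j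

/-- The lumpability cost Δ_L^{k+1}(X, g) = H(Y_{k+2} | Y_1^{k+1}) - H(Y_{k+2} | Y_2^{k+1}, X_1),
for the stationary chain with invariant distribution `μ` and transition matrix `P`. -/
noncomputable def lumpCost (μ : 𝒳 → ℝ) (P : Matrix 𝒳 𝒳 ℝ) (g : 𝒳 → 𝒴) (k : ℕ) : ℝ :=
  condEntPMF (fun q : 𝒴 × (Fin (k + 1) → 𝒴) => yPath μ P g (k + 2) (Fin.snoc q.2 q.1)) -
  condEntPMF (fun q : 𝒴 × (𝒳 × (Fin k → 𝒴)) =>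
    xyPath μ P g (k + 1) q.2.1 (Fin.snoc q.2.2 q.1))

/-- The predictability cost Δ_P^{k+1}(X, g) = I(X_2 ; X_1) - I(Y_{k+2} ; Y_1^{k+1}),
for the stationary chain with invariant distribution `μ` and transition matrix `P`. -/
noncomputable def predCost (μ : 𝒳 → ℝ) (P : Matrix 𝒳 𝒳 ℝ) (g : 𝒳 → 𝒴) (k : ℕ) : ℝ :=
  mutInfPMF (fun q : 𝒳 × 𝒳 => μ q.1 * P q.1 q.2) -
  mutInfPMF (fun q : 𝒴 × (Fin (k + 1) → 𝒴) => yPath μ P g (k + 2) (Fin.snoc q.2 q.1))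

/-- Path probabilities of a stationary `K`-th order Markov chain on `𝒴` with stationary
`K`-dimensional distribution `ρ` and transition matrix `R`. -/
noncomputable def mkvPath {K : ℕ} (ρ : (Fin K → 𝒴) → ℝ) (R : (Fin K → 𝒴) → 𝒴 → ℝ)
    (n : ℕ) (y : Fin n → 𝒴) : ℝ :=
  if h : K ≤ n then
    ρ (fun i => y ⟨i.val, lt_of_lt_of_le i.isLt h⟩) *
      ∏ m : Fin n, if hm : K ≤ m.val then
        R (fun i => y ⟨m.val - K + i.val, by have h1 := i.isLt; have h2 := m.isLt; omega⟩) (y m)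
      else 1
  else
    ∑ z : Fin K → 𝒴, if ∀ i : Fin n, z ⟨i.val, by have := i.isLt; omega⟩ = y i then ρ z else 0

end MarkovAggregation


namespace StmtAux

variable {ι α β γ : Type*} [Fintype α] [Fintype β] [Fintype γ]

open Real Finset



lemma negMulLog_add_le {x y : ℝ} (hx : 0 ≤ x) (hy : 0 ≤ y) :
    negMulLog (x + y) ≤ negMulLog x + negMulLog y := by
  rcases eq_or_lt_of_le hx with h | h
  · simp [← h]
  rcases eq_or_lt_of_le hy with h' | h'
  · simp [← h']
  have h1 : x * Real.log x ≤ x * Real.log (x + y) :=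
    mul_le_mul_of_nonneg_left (Real.log_le_log h (by linarith)) hx
  have h2 : y * Real.log y ≤ y * Real.log (x + y) :=
    mul_le_mul_of_nonneg_left (Real.log_le_log h' (by linarith)) hy
  simp only [negMulLog, neg_mul]
  nlinarith

lemma negMulLog_sum_le (s : Finset ι) (p : ι → ℝ) (hp : ∀ i ∈ s, 0 ≤ p i) :
    negMulLog (∑ i ∈ s, p i) ≤ ∑ i ∈ s, negMulLog (p i) := by
  induction s using Finset.cons_induction with
  | empty => simp
  | cons i s his ih =>
    rw [Finset.sum_cons, Finset.sum_cons]
    calc negMulLog (p i + ∑ j ∈ s, p j)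
        ≤ negMulLog (p i) + negMulLog (∑ j ∈ s, p j) :=
          negMulLog_add_le (hp i (Finset.mem_cons_self i s))
            (Finset.sum_nonneg fun j hj => hp j (Finset.mem_cons_of_mem hj))
      _ ≤ _ := by
          gcongr
          exact ih fun j hj => hp j (Finset.mem_cons_of_mem hj)

/-- The log-sum inequality. -/
lemma logSum (s : Finset ι) (a b : ι → ℝ) (ha : ∀ i ∈ s, 0 ≤ a i) (hb : ∀ i ∈ s, 0 ≤ b i)
    (hab : ∀ i ∈ s, b i = 0 → a i = 0) :
    (∑ i ∈ s, a i) * Real.log (∑ i ∈ s, a i) - (∑ i ∈ s, a i) * Real.log (∑ i ∈ s, b i)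
      ≤ ∑ i ∈ s, (a i * Real.log (a i) - a i * Real.log (b i)) := by
  classical
  set A := ∑ i ∈ s, a i with hA
  set B := ∑ i ∈ s, b i with hB
  by_cases hB0 : B = 0
  · have hb0 : ∀ i ∈ s, b i = 0 := by
      intro i hi
      exact le_antisymm (hB0 ▸ Finset.single_le_sum hb hi) (hb i hi)
    have ha0 : ∀ i ∈ s, a i = 0 := fun i hi => hab i hi (hb0 i hi)
    have hA0 : A = 0 := Finset.sum_eq_zero ha0
    rw [hA0]
    have : ∀ i ∈ s, a i * Real.log (a i) - a i * Real.log (b i) = 0 := by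
      intro i hi; rw [ha0 i hi]; simp
    rw [Finset.sum_congr rfl this]
    simp
  · have hBpos : 0 < B := lt_of_le_of_ne (hB ▸ Finset.sum_nonneg hb) (Ne.symm hB0)
    set t := s.filter (fun i => b i ≠ 0) with ht
    have hts : t ⊆ s := Finset.filter_subset _ _
    have hbt : ∀ i ∈ t, 0 < b i := by
      intro i hi
      rw [ht, Finset.mem_filter] at hi
      exact lt_of_le_of_ne (hb i hi.1) (Ne.symm hi.2)
    have hAt : ∑ i ∈ t, a i = A := by
      rw [hA, ht]
      exact Finset.sum_filter_of_ne (fun i hi hne hb0 => hne (hab i hi hb0))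
    have hBt : ∑ i ∈ t, b i = B := by
      rw [hB, ht]
      exact Finset.sum_filter_of_ne (fun i hi hne => hne)
    have hsum_t : ∑ i ∈ t, (a i * Real.log (a i) - a i * Real.log (b i))
        = ∑ i ∈ s, (a i * Real.log (a i) - a i * Real.log (b i)) := by
      refine Finset.sum_subset hts ?_
      intro i hi hni
      have hbi : b i = 0 := by
        by_contra hne
        exact hni (Finset.mem_filter.mpr ⟨hi, hne⟩)
      rw [hab i hi hbi]; simp
    have hw0 : ∀ i ∈ t, (0:ℝ) ≤ b i / B := fun i hi => div_nonneg (hbt i hi).le hBpos.le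
    have hw1 : ∑ i ∈ t, b i / B = 1 := by
      rw [← Finset.sum_div, hBt, div_self hB0]
    have hmem : ∀ i ∈ t, a i / b i ∈ Set.Ici (0:ℝ) := fun i hi =>
      div_nonneg (ha i (hts hi)) (hbt i hi).le
    have jensen := concaveOn_negMulLog.le_map_sum hw0 hw1 hmem
    have hpt : ∑ i ∈ t, (b i / B) • (a i / b i) = A / B := by
      rw [← hAt, Finset.sum_div]
      refine Finset.sum_congr rfl ?_
      intro i hi
      have : b i ≠ 0 := (hbt i hi).ne'
      field_simp
      rw [smul_eq_mul]
      field_simp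
    have hlhs : ∀ i ∈ t, (b i / B) • negMulLog (a i / b i)
        = (a i * Real.log (b i) - a i * Real.log (a i)) / B := by
      intro i hi
      have hbi : b i ≠ 0 := (hbt i hi).ne'
      rcases eq_or_lt_of_le (ha i (hts hi)) with h0 | h0
      · rw [← h0]; simp
      · rw [smul_eq_mul, negMulLog, Real.log_div h0.ne' hbi]
        field_simp
        ring
    rw [hpt, Finset.sum_congr rfl hlhs] at jensen
    have hrhs : negMulLog (A / B) = (A * Real.log B - A * Real.log A) / B := by
      rcases eq_or_lt_of_le (hA ▸ Finset.sum_nonneg ha) with h0 | h0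
      · rw [← h0]; simp
      · rw [negMulLog, Real.log_div h0.ne' hB0]
        field_simp
        ring
    rw [hrhs, ← Finset.sum_div, div_le_div_iff_of_pos_right hBpos] at jensen
    rw [← hsum_t]
    have expand : ∑ i ∈ t, (a i * Real.log (b i) - a i * Real.log (a i))
        = - ∑ i ∈ t, (a i * Real.log (a i) - a i * Real.log (b i)) := by
      rw [← Finset.sum_neg_distrib]
      exact Finset.sum_congr rfl fun i _ => by ring
    rw [expand] at jensen
    linarith







/-- entPMF is invariant under reindexing by an equivalence. -/
lemma entPMF_equiv (e : α ≃ β) (p : β → ℝ) :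
    entPMF (fun a => p (e a)) = entPMF p :=
  Fintype.sum_equiv e _ _ (fun _ => rfl)

lemma fiberwise [DecidableEq β] (f : γ → β) (G : γ → ℝ) :
    ∑ c : γ, G c = ∑ b : β, ∑ c ∈ Finset.univ.filter (fun c => f c = b), G c := by
  simp only [Finset.sum_filter]
  rw [Finset.sum_comm]
  simp

/-- entropy of a pushforward is at most the entropy. -/
lemma entPMF_push_le [DecidableEq β] (f : α → β) (p : α → ℝ) (hp : ∀ a, 0 ≤ p a) :
    entPMF (fun b => ∑ a : α, if f a = b then p a else 0) ≤ entPMF p := by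
  rw [entPMF, entPMF, fiberwise f (fun a => negMulLog (p a))]
  refine Finset.sum_le_sum ?_
  intro b _
  have : (∑ a : α, if f a = b then p a else 0)
      = ∑ a ∈ Finset.univ.filter (fun a => f a = b), p a := by
    rw [Finset.sum_filter]
  rw [this]
  exact negMulLog_sum_le _ _ (fun a _ => hp a)

/-- condEntPMF is invariant under reindexing the conditioning variable. -/
lemma condEntPMF_equiv (e : γ ≃ β) (p : α × β → ℝ) :
    condEntPMF (fun q : α × γ => p (q.1, e q.2)) = condEntPMF p := by
  unfold condEntPMF
  congr 1
  · exact Fintype.sum_equiv (Equiv.prodCongr (Equiv.refl α) e) _ _ (fun _ => rfl)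
  · exact Fintype.sum_equiv e _ _ (fun c => rfl)

/-- Conditioning on a coarsening increases conditional entropy: `H(A | C) ≤ H(A | f(C))`. -/
lemma condEnt_le_push [DecidableEq β] (p : α × γ → ℝ) (hp : ∀ q, 0 ≤ p q) (f : γ → β) :
    condEntPMF p ≤
      condEntPMF (fun q : α × β => ∑ c : γ, if f c = q.2 then p (q.1, c) else 0) := by
  classical
  set m : γ → ℝ := margSnd p with hm
  have hmv : ∀ c, m c = ∑ a : α, p (a, c) := fun c => rfl
  have hm0 : ∀ c, 0 ≤ m c := fun c => by
    rw [hmv]; exact Finset.sum_nonneg fun a _ => hp _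
  set S : β → Finset γ := fun b => Finset.univ.filter (fun c => f c = b) with hS
  set q : α → β → ℝ := fun a b => ∑ c ∈ S b, p (a, c) with hq
  set M : β → ℝ := fun b => ∑ c ∈ S b, m c with hM
  have hqv : ∀ a b, (∑ c : γ, if f c = b then p (a, c) else 0) = q a b := by
    intro a b
    rw [hq, hS]
    simp [Finset.sum_filter]
  have hMq : ∀ b, ∑ a : α, q a b = M b := by
    intro b
    rw [hM, hq, Finset.sum_comm]
    exact Finset.sum_congr rfl fun c _ => (hmv c).symm
  have lhs_eq : condEntPMF p
      = ∑ b : β, ((∑ a : α, ∑ c ∈ S b, negMulLog (p (a, c))) - ∑ c ∈ S b, negMulLog (m c)) := by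
    rw [condEntPMF, Finset.sum_sub_distrib, ← hm]
    congr 1
    · rw [entPMF, Fintype.sum_prod_type]
      rw [show (∑ a : α, ∑ c : γ, negMulLog (p (a, c)))
          = ∑ a : α, ∑ b : β, ∑ c ∈ S b, negMulLog (p (a, c)) from
        Finset.sum_congr rfl fun a _ => by rw [hS]; exact fiberwise f _]
      exact Finset.sum_comm
    · rw [entPMF, hS]
      exact fiberwise f (fun c => negMulLog (m c))
  have rhs_eq : condEntPMF (fun q' : α × β => ∑ c : γ, if f c = q'.2 then p (q'.1, c) else 0)
      = ∑ b : β, ((∑ a : α, negMulLog (q a b)) - negMulLog (M b)) := by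
    rw [condEntPMF, Finset.sum_sub_distrib]
    congr 1
    · rw [entPMF, Fintype.sum_prod_type, Finset.sum_comm]
      refine Finset.sum_congr rfl fun b _ => Finset.sum_congr rfl fun a _ => ?_
      rw [hqv]
    · rw [entPMF]
      refine Finset.sum_congr rfl fun b _ => ?_
      rw [margSnd]
      simp only [hqv]
      rw [hMq]
  rw [lhs_eq, rhs_eq]
  refine Finset.sum_le_sum ?_
  intro b _
  have supp : ∀ c, m c = 0 → ∀ a, p (a, c) = 0 := by
    intro c hc a
    have h1 : p (a, c) ≤ m c := by
      rw [hmv]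
      exact Finset.single_le_sum (f := fun a' => p (a', c)) (fun a' _ => hp _)
        (Finset.mem_univ a)
    exact le_antisymm (hc ▸ h1) (hp _)
  have key : ∀ a : α, q a b * Real.log (q a b) - q a b * Real.log (M b)
      ≤ ∑ c ∈ S b, (p (a, c) * Real.log (p (a, c)) - p (a, c) * Real.log (m c)) := by
    intro a
    have h := logSum (S b) (fun c => p (a, c)) m (fun c _ => hp _) (fun c _ => hm0 c)
      (fun c _ h0 => supp c h0 a)
    rw [hq, hM]
    exact h
  have keysum : ∑ a : α, (q a b * Real.log (q a b) - q a b * Real.log (M b))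
      ≤ ∑ a : α, ∑ c ∈ S b, (p (a, c) * Real.log (p (a, c)) - p (a, c) * Real.log (m c)) :=
    Finset.sum_le_sum fun a _ => key a
  have e1 : ∑ a : α, (q a b * Real.log (q a b) - q a b * Real.log (M b))
      = (∑ a : α, q a b * Real.log (q a b)) - M b * Real.log (M b) := by
    rw [Finset.sum_sub_distrib, ← Finset.sum_mul, hMq]
  have e2 : ∑ a : α, ∑ c ∈ S b, (p (a, c) * Real.log (p (a, c)) - p (a, c) * Real.log (m c))
      = (∑ a : α, ∑ c ∈ S b, p (a, c) * Real.log (p (a, c)))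
        - ∑ c ∈ S b, m c * Real.log (m c) := by
    simp only [Finset.sum_sub_distrib]
    congr 1
    rw [Finset.sum_comm]
    refine Finset.sum_congr rfl fun c _ => ?_
    rw [← Finset.sum_mul, ← hmv]
  rw [e1, e2] at keysum
  simp only [negMulLog, neg_mul, Finset.sum_neg_distrib]
  linarith



lemma sum_sum_mul_right (F : α → ℝ) (G : γ → ℝ) :
    ∑ a : α, ∑ c : γ, G c * F a = (∑ c : γ, G c) * (∑ a : α, F a) := by
  calc ∑ a : α, ∑ c : γ, G c * F a = ∑ a : α, (∑ c : γ, G c) * F a :=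
        Finset.sum_congr rfl fun a _ => (Finset.sum_mul _ _ _).symm
    _ = (∑ c : γ, G c) * (∑ a : α, F a) := (Finset.mul_sum _ _ _).symm

lemma sum_sum_mul_left (F : α → ℝ) (G : γ → ℝ) :
    ∑ a : α, ∑ c : γ, F a * G c = (∑ a : α, F a) * (∑ c : γ, G c) := by
  calc ∑ a : α, ∑ c : γ, F a * G c = ∑ a : α, F a * (∑ c : γ, G c) :=
        Finset.sum_congr rfl fun a _ => (Finset.mul_sum _ _ _).symm
    _ = (∑ a : α, F a) * (∑ c : γ, G c) := (Finset.sum_mul _ _ _).symm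

/-- If the joint pmf of (A,(B,C)) factorizes as v(b,a)·w(c,b) (conditional independence of A and C
given B), then H(A | B, C) = H(A | B). -/
lemma condEnt_factor (v : β → α → ℝ) (w : γ → β → ℝ) :
    condEntPMF (fun q : α × (β × γ) => v q.2.1 q.1 * w q.2.2 q.2.1)
      = condEntPMF (fun q : α × β => v q.2 q.1 * (∑ c : γ, w c q.2)) := by
  have inner : ∀ b : β, ∑ a : α, ∑ c : γ, negMulLog (v b a * w c b)
      = (∑ c : γ, w c b) * (∑ a : α, negMulLog (v b a))
        + (∑ a : α, v b a) * (∑ c : γ, negMulLog (w c b)) := by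
    intro b
    simp only [negMulLog_mul, Finset.sum_add_distrib]
    rw [sum_sum_mul_right (fun a => negMulLog (v b a)) (fun c => w c b),
      sum_sum_mul_left (fun a => v b a) (fun c => negMulLog (w c b))]
  have h1 : entPMF (fun q : α × (β × γ) => v q.2.1 q.1 * w q.2.2 q.2.1)
      = ∑ b : β, ((∑ c : γ, w c b) * (∑ a : α, negMulLog (v b a))
          + (∑ a : α, v b a) * (∑ c : γ, negMulLog (w c b))) := by
    rw [entPMF, Fintype.sum_prod_type]
    simp only [Fintype.sum_prod_type]
    rw [Finset.sum_comm]
    exact Finset.sum_congr rfl fun b _ => inner b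
  have h2 : entPMF (margSnd (fun q : α × (β × γ) => v q.2.1 q.1 * w q.2.2 q.2.1))
      = ∑ b : β, ((∑ c : γ, w c b) * negMulLog (∑ a : α, v b a)
          + (∑ a : α, v b a) * (∑ c : γ, negMulLog (w c b))) := by
    rw [entPMF]
    have : ∀ bc : β × γ, margSnd (fun q : α × (β × γ) => v q.2.1 q.1 * w q.2.2 q.2.1) bc
        = (∑ a : α, v bc.1 a) * w bc.2 bc.1 := by
      intro bc
      rw [margSnd, Finset.sum_mul]
    rw [Finset.sum_congr rfl fun bc _ => congrArg negMulLog (this bc)]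
    rw [Fintype.sum_prod_type]
    refine Finset.sum_congr rfl fun b _ => ?_
    simp only [negMulLog_mul, Finset.sum_add_distrib]
    congr 1
    · rw [← Finset.sum_mul]
    · rw [← Finset.mul_sum]
  have h3 : entPMF (fun q : α × β => v q.2 q.1 * (∑ c : γ, w c q.2))
      = ∑ b : β, ((∑ c : γ, w c b) * (∑ a : α, negMulLog (v b a))
          + (∑ a : α, v b a) * negMulLog (∑ c : γ, w c b)) := by
    rw [entPMF, Fintype.sum_prod_type, Finset.sum_comm]
    refine Finset.sum_congr rfl fun b _ => ?_
    simp only [negMulLog_mul, Finset.sum_add_distrib]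
    congr 1
    · rw [← Finset.mul_sum]
    · rw [← Finset.sum_mul]
  have h4 : entPMF (margSnd (fun q : α × β => v q.2 q.1 * (∑ c : γ, w c q.2)))
      = ∑ b : β, ((∑ c : γ, w c b) * negMulLog (∑ a : α, v b a)
          + (∑ a : α, v b a) * negMulLog (∑ c : γ, w c b)) := by
    rw [entPMF]
    have : ∀ b : β, margSnd (fun q : α × β => v q.2 q.1 * (∑ c : γ, w c q.2)) b
        = (∑ a : α, v b a) * (∑ c : γ, w c b) := by
      intro b
      rw [margSnd, Finset.sum_mul]
    rw [Finset.sum_congr rfl fun b _ => congrArg negMulLog (this b)]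
    refine Finset.sum_congr rfl fun b _ => ?_
    rw [negMulLog_mul]
  rw [condEntPMF, condEntPMF, h1, h2, h3, h4]
  rw [← Finset.sum_sub_distrib, ← Finset.sum_sub_distrib]
  refine Finset.sum_congr rfl fun b _ => ?_
  ring

end StmtAux

section MarkovAggregation

variable {𝒳 : Type*} {𝒴 : Type*} [Fintype 𝒳] [DecidableEq 𝒳] [Fintype 𝒴] [DecidableEq 𝒴]

namespace StmtAux


variable (π μ : 𝒳 → ℝ) (P : Matrix 𝒳 𝒳 ℝ) (g : 𝒳 → 𝒴)

set_option linter.unusedSectionVars false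

lemma xPath_eq (m : ℕ) (x : Fin (m + 1) → 𝒳) :
    xPath π P (m + 1) x = π (x 0) * ∏ i : Fin m, P (x i.castSucc) (x i.succ) := by
  rw [xPath, dif_pos (Nat.succ_pos m)]
  congr 1
  rw [Fin.prod_univ_castSucc]
  have hlast : (if h : (Fin.last m).val + 1 < m + 1 then
      P (x (Fin.last m)) (x ⟨(Fin.last m).val + 1, h⟩) else 1) = 1 := by
    rw [dif_neg]; simp [Fin.last]
  rw [hlast, mul_one]
  refine Finset.prod_congr rfl fun i _ => ?_
  rw [dif_pos (by simp)]
  congr 1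

lemma xPath_snoc (m : ℕ) (x : Fin (m + 1) → 𝒳) (j : 𝒳) :
    xPath π P (m + 2) (Fin.snoc x j) = xPath π P (m + 1) x * P (x (Fin.last m)) j := by
  rw [xPath_eq, xPath_eq, Fin.prod_univ_castSucc]
  have h0 : (Fin.snoc x j : Fin (m+2) → 𝒳) 0 = x 0 := by
    rw [show (0 : Fin (m + 2)) = Fin.castSucc 0 from rfl, Fin.snoc_castSucc]
  have h1 : ∀ i : Fin m,
      P ((Fin.snoc x j : Fin (m+2) → 𝒳) i.castSucc.castSucc)
        ((Fin.snoc x j : Fin (m+2) → 𝒳) i.castSucc.succ)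
      = P (x i.castSucc) (x i.succ) := by
    intro i
    rw [Fin.succ_castSucc, Fin.snoc_castSucc, Fin.snoc_castSucc]
  have h2 : P ((Fin.snoc x j : Fin (m+2) → 𝒳) (Fin.last m).castSucc)
      ((Fin.snoc x j : Fin (m+2) → 𝒳) (Fin.last m).succ) = P (x (Fin.last m)) j := by
    rw [Fin.succ_last, Fin.snoc_castSucc, Fin.snoc_last]
  rw [h0, h2, Finset.prod_congr rfl fun i _ => h1 i]
  ring

lemma xPath_cons (m : ℕ) (x₀ : 𝒳) (x : Fin (m + 1) → 𝒳) :
    xPath π P (m + 2) (Fin.cons x₀ x)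
      = π x₀ * P x₀ (x 0) * ∏ i : Fin m, P (x i.castSucc) (x i.succ) := by
  rw [xPath_eq, Fin.cons_zero, Fin.prod_univ_succ]
  have h0 : P ((Fin.cons x₀ x : Fin (m+2) → 𝒳) (Fin.castSucc 0))
      ((Fin.cons x₀ x : Fin (m+2) → 𝒳) (Fin.succ 0)) = P x₀ (x 0) := by
    rw [Fin.castSucc_zero, Fin.cons_zero, Fin.cons_succ]
  have h1 : ∀ i : Fin m,
      P ((Fin.cons x₀ x : Fin (m+2) → 𝒳) i.succ.castSucc)
        ((Fin.cons x₀ x : Fin (m+2) → 𝒳) i.succ.succ) = P (x i.castSucc) (x i.succ) := by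
    intro i
    rw [← Fin.succ_castSucc, Fin.cons_succ, Fin.cons_succ]
  rw [h0, Finset.prod_congr rfl fun i _ => h1 i]
  ring


lemma xPath_nonneg (hπ : ∀ x, 0 ≤ π x) (hP0 : ∀ i j, 0 ≤ P i j) (n : ℕ) (x : Fin n → 𝒳) :
    0 ≤ xPath π P n x := by
  rw [xPath]
  apply mul_nonneg
  · split_ifs
    exacts [hπ _, zero_le_one]
  · apply Finset.prod_nonneg
    intro i _
    split_ifs
    exacts [hP0 _ _, zero_le_one]

lemma yPath_nonneg (hπ : ∀ x, 0 ≤ π x) (hP0 : ∀ i j, 0 ≤ P i j) (n : ℕ) (y : Fin n → 𝒴) :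
    0 ≤ yPath π P g n y :=
  Finset.sum_nonneg fun x _ => by
    split_ifs
    exacts [xPath_nonneg π P hπ hP0 n x, le_refl 0]

lemma xyPath_nonneg (hπ : ∀ x, 0 ≤ π x) (hP0 : ∀ i j, 0 ≤ P i j) (m : ℕ) (x₀ : 𝒳)
    (y : Fin m → 𝒴) : 0 ≤ xyPath π P g m x₀ y :=
  Finset.sum_nonneg fun x _ => by
    split_ifs
    exacts [xPath_nonneg π P hπ hP0 _ x, le_refl 0]

lemma snoc_head {α : Type*} (m : ℕ) (x : Fin (m + 1) → α) (j : α) :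
    (Fin.snoc x j : Fin (m + 2) → α) 0 = x 0 := by
  rw [show (0 : Fin (m + 2)) = Fin.castSucc 0 from rfl, Fin.snoc_castSucc]

lemma tail_snoc {α : Type*} (m : ℕ) (y : Fin (m + 1) → α) (a : α) :
    Fin.tail (Fin.snoc y a : Fin (m + 2) → α) = Fin.snoc (Fin.tail y) a := by
  funext i
  induction i using Fin.lastCases with
  | last =>
    rw [Fin.snoc_last, Fin.tail, Fin.succ_last, Fin.snoc_last]
  | cast i =>
    rw [Fin.snoc_castSucc, Fin.tail, Fin.tail, Fin.succ_castSucc, Fin.snoc_castSucc]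

/-- summing out the last coordinate of `yPath`. -/
lemma sum_yPath_snoc (hP1 : ∀ i, ∑ j : 𝒳, P i j = 1) (m : ℕ) (y : Fin (m + 1) → 𝒴) :
    ∑ a : 𝒴, yPath π P g (m + 2) (Fin.snoc y a) = yPath π P g (m + 1) y := by
  classical
  have reidx : ∀ a : 𝒴, yPath π P g (m + 2) (Fin.snoc y a)
      = ∑ q : 𝒳 × (Fin (m + 1) → 𝒳),
          if (∀ i : Fin (m + 1), g (q.2 i) = y i) ∧ g q.1 = a
          then xPath π P (m + 2) (Fin.snoc q.2 q.1) else 0 := by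
    intro a
    rw [yPath, ← (Fin.snocEquiv (fun _ => 𝒳)).sum_comp]
    refine Finset.sum_congr rfl fun q _ => ?_
    have he : (Fin.snocEquiv (fun _ => 𝒳)) q = Fin.snoc q.2 q.1 := by
      funext i; rfl
    rw [he]
    congr 1
    apply propext
    constructor
    · intro h
      refine ⟨fun i => ?_, ?_⟩
      · have := h i.castSucc
        rwa [Fin.snoc_castSucc, Fin.snoc_castSucc] at this
      · have := h (Fin.last (m + 1))
        rwa [Fin.snoc_last, Fin.snoc_last] at this
    · intro ⟨h1, h2⟩ i
      induction i using Fin.lastCases with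
      | last => rwa [Fin.snoc_last, Fin.snoc_last]
      | cast i => rw [Fin.snoc_castSucc, Fin.snoc_castSucc]; exact h1 i
  simp only [reidx]
  rw [Finset.sum_comm]
  have step1 : ∀ q : 𝒳 × (Fin (m + 1) → 𝒳),
      (∑ a : 𝒴, if (∀ i : Fin (m + 1), g (q.2 i) = y i) ∧ g q.1 = a
        then xPath π P (m + 2) (Fin.snoc q.2 q.1) else 0)
      = if (∀ i : Fin (m + 1), g (q.2 i) = y i)
          then xPath π P (m + 2) (Fin.snoc q.2 q.1) else 0 := by
    intro q
    have : ∀ a : 𝒴, (if (∀ i : Fin (m + 1), g (q.2 i) = y i) ∧ g q.1 = a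
        then xPath π P (m + 2) (Fin.snoc q.2 q.1) else 0)
        = if g q.1 = a then (if (∀ i : Fin (m + 1), g (q.2 i) = y i)
            then xPath π P (m + 2) (Fin.snoc q.2 q.1) else 0) else 0 := by
      intro a
      split_ifs <;> tauto
    rw [Finset.sum_congr rfl fun a _ => this a]
    rw [Finset.sum_ite_eq Finset.univ (g q.1)
      (fun _ => if (∀ i : Fin (m + 1), g (q.2 i) = y i)
          then xPath π P (m + 2) (Fin.snoc q.2 q.1) else 0)]
    simp
  rw [Finset.sum_congr rfl fun q _ => step1 q]
  rw [Fintype.sum_prod_type, Finset.sum_comm, yPath]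
  refine Finset.sum_congr rfl fun x' _ => ?_
  have : ∀ j : 𝒳, (if (∀ i : Fin (m + 1), g (x' i) = y i)
      then xPath π P (m + 2) (Fin.snoc x' j) else 0)
      = if (∀ i : Fin (m + 1), g (x' i) = y i)
        then xPath π P (m + 1) x' * P (x' (Fin.last m)) j else 0 := by
    intro j
    rw [xPath_snoc]
  rw [Finset.sum_congr rfl fun j _ => this j]
  split_ifs with h
  · rw [← Finset.mul_sum, hP1, mul_one]
  · simp

/-- summing out the last coordinate of `xyPath`. -/
lemma sum_xyPath_snoc (hP1 : ∀ i, ∑ j : 𝒳, P i j = 1) (m : ℕ) (x₀ : 𝒳) (y : Fin m → 𝒴) :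
    ∑ a : 𝒴, xyPath π P g (m + 1) x₀ (Fin.snoc y a) = xyPath π P g m x₀ y := by
  classical
  have reidx : ∀ a : 𝒴, xyPath π P g (m + 1) x₀ (Fin.snoc y a)
      = ∑ q : 𝒳 × (Fin (m + 1) → 𝒳),
          if (q.2 0 = x₀ ∧ ∀ i : Fin m, g (q.2 i.succ) = y i) ∧ g q.1 = a
          then xPath π P (m + 2) (Fin.snoc q.2 q.1) else 0 := by
    intro a
    rw [xyPath, ← (Fin.snocEquiv (fun _ => 𝒳)).sum_comp]
    refine Finset.sum_congr rfl fun q _ => ?_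
    have he : (Fin.snocEquiv (fun _ => 𝒳)) q = Fin.snoc q.2 q.1 := by
      funext i; rfl
    rw [he]
    congr 1
    apply propext
    rw [snoc_head]
    constructor
    · intro ⟨h0, h⟩
      refine ⟨⟨h0, fun i => ?_⟩, ?_⟩
      · have := h i.castSucc
        rwa [Fin.succ_castSucc, Fin.snoc_castSucc, Fin.snoc_castSucc] at this
      · have := h (Fin.last m)
        rwa [Fin.succ_last, Fin.snoc_last, Fin.snoc_last] at this
    · intro ⟨⟨h0, h1⟩, h2⟩
      refine ⟨h0, fun i => ?_⟩
      induction i using Fin.lastCases with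
      | last => rwa [Fin.succ_last, Fin.snoc_last, Fin.snoc_last]
      | cast i =>
        rw [Fin.succ_castSucc, Fin.snoc_castSucc, Fin.snoc_castSucc]
        exact h1 i
  simp only [reidx]
  rw [Finset.sum_comm]
  have step1 : ∀ q : 𝒳 × (Fin (m + 1) → 𝒳),
      (∑ a : 𝒴, if (q.2 0 = x₀ ∧ ∀ i : Fin m, g (q.2 i.succ) = y i) ∧ g q.1 = a
        then xPath π P (m + 2) (Fin.snoc q.2 q.1) else 0)
      = if q.2 0 = x₀ ∧ ∀ i : Fin m, g (q.2 i.succ) = y i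
          then xPath π P (m + 2) (Fin.snoc q.2 q.1) else 0 := by
    intro q
    have : ∀ a : 𝒴, (if (q.2 0 = x₀ ∧ ∀ i : Fin m, g (q.2 i.succ) = y i) ∧ g q.1 = a
        then xPath π P (m + 2) (Fin.snoc q.2 q.1) else 0)
        = if g q.1 = a then (if q.2 0 = x₀ ∧ ∀ i : Fin m, g (q.2 i.succ) = y i
            then xPath π P (m + 2) (Fin.snoc q.2 q.1) else 0) else 0 := by
      intro a
      split_ifs <;> tauto
    rw [Finset.sum_congr rfl fun a _ => this a]
    rw [Finset.sum_ite_eq Finset.univ (g q.1)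
      (fun _ => if q.2 0 = x₀ ∧ ∀ i : Fin m, g (q.2 i.succ) = y i
          then xPath π P (m + 2) (Fin.snoc q.2 q.1) else 0)]
    simp
  rw [Finset.sum_congr rfl fun q _ => step1 q]
  rw [Fintype.sum_prod_type, Finset.sum_comm, xyPath]
  refine Finset.sum_congr rfl fun x' _ => ?_
  have : ∀ j : 𝒳, (if x' 0 = x₀ ∧ ∀ i : Fin m, g (x' i.succ) = y i
      then xPath π P (m + 2) (Fin.snoc x' j) else 0)
      = if x' 0 = x₀ ∧ ∀ i : Fin m, g (x' i.succ) = y i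
        then xPath π P (m + 1) x' * P (x' (Fin.last m)) j else 0 := by
    intro j
    rw [xPath_snoc]
  rw [Finset.sum_congr rfl fun j _ => this j]
  split_ifs with h
  · rw [← Finset.mul_sum, hP1, mul_one]
  · simp

/-- stationarity: summing out the first coordinate of `yPath`. -/
lemma sum_yPath_cons (hμ2 : ∀ j, ∑ i : 𝒳, μ i * P i j = μ j) (m : ℕ) (y : Fin (m + 1) → 𝒴) :
    ∑ a : 𝒴, yPath μ P g (m + 2) (Fin.cons a y) = yPath μ P g (m + 1) y := by
  classical
  have reidx : ∀ a : 𝒴, yPath μ P g (m + 2) (Fin.cons a y)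
      = ∑ x : Fin (m + 2) → 𝒳,
          if g (x 0) = a ∧ ∀ i : Fin (m + 1), g (x i.succ) = y i
          then xPath μ P (m + 2) x else 0 := by
    intro a
    rw [yPath]
    refine Finset.sum_congr rfl fun x _ => ?_
    congr 1
    apply propext
    rw [Fin.forall_fin_succ]
    simp only [Fin.cons_zero, Fin.cons_succ]
  simp only [reidx]
  rw [Finset.sum_comm]
  have step1 : ∀ x : Fin (m + 2) → 𝒳,
      (∑ a : 𝒴, if g (x 0) = a ∧ ∀ i : Fin (m + 1), g (x i.succ) = y i
        then xPath μ P (m + 2) x else 0)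
      = if ∀ i : Fin (m + 1), g (x i.succ) = y i then xPath μ P (m + 2) x else 0 := by
    intro x
    have : ∀ a : 𝒴, (if g (x 0) = a ∧ ∀ i : Fin (m + 1), g (x i.succ) = y i
        then xPath μ P (m + 2) x else 0)
        = if g (x 0) = a then (if ∀ i : Fin (m + 1), g (x i.succ) = y i
            then xPath μ P (m + 2) x else 0) else 0 := by
      intro a
      split_ifs <;> tauto
    rw [Finset.sum_congr rfl fun a _ => this a]
    rw [Finset.sum_ite_eq Finset.univ (g (x 0))
      (fun _ => if ∀ i : Fin (m + 1), g (x i.succ) = y i then xPath μ P (m + 2) x else 0)]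
    simp
  rw [Finset.sum_congr rfl fun x _ => step1 x]
  rw [← (Fin.consEquiv (fun _ => 𝒳)).sum_comp]
  have he : ∀ q : 𝒳 × (Fin (m + 1) → 𝒳),
      (Fin.consEquiv (fun _ => 𝒳)) q = Fin.cons q.1 q.2 := fun q => rfl
  have term : ∀ q : 𝒳 × (Fin (m + 1) → 𝒳),
      (if ∀ i : Fin (m + 1), g (((Fin.consEquiv (fun _ => 𝒳)) q) i.succ) = y i
        then xPath μ P (m + 2) ((Fin.consEquiv (fun _ => 𝒳)) q) else 0)
      = if ∀ i : Fin (m + 1), g (q.2 i) = y i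
          then μ q.1 * P q.1 (q.2 0) *
            ∏ i : Fin m, P (q.2 i.castSucc) (q.2 i.succ) else 0 := by
    intro q
    rw [he, xPath_cons]
    congr 1
  rw [Finset.sum_congr rfl fun q _ => term q]
  rw [Fintype.sum_prod_type, Finset.sum_comm, yPath]
  refine Finset.sum_congr rfl fun x' _ => ?_
  dsimp only
  split_ifs with h
  · have : ∀ x₀ : 𝒳, μ x₀ * P x₀ (x' 0) * ∏ i : Fin m, P (x' i.castSucc) (x' i.succ)
        = μ x₀ * P x₀ (x' 0) * ∏ i : Fin m, P (x' i.castSucc) (x' i.succ) := fun _ => rfl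
    rw [← Finset.sum_mul, hμ2, ← xPath_eq]
  · simp

/-- summing the hidden initial state of `xyPath` gives `yPath`. -/
lemma sum_xyPath_head (m : ℕ) (y₀ : 𝒴) (y : Fin m → 𝒴) :
    ∑ x₁ : 𝒳, (if g x₁ = y₀ then xyPath π P g m x₁ y else 0)
      = yPath π P g (m + 1) (Fin.cons y₀ y) := by
  classical
  simp only [xyPath]
  have pull : ∀ x₁ : 𝒳, (if g x₁ = y₀ then
      (∑ x : Fin (m + 1) → 𝒳,
        if x 0 = x₁ ∧ ∀ i : Fin m, g (x i.succ) = y i then xPath π P (m + 1) x else 0) else 0)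
      = ∑ x : Fin (m + 1) → 𝒳, if g x₁ = y₀ then
          (if x 0 = x₁ ∧ ∀ i : Fin m, g (x i.succ) = y i then xPath π P (m + 1) x else 0)
          else 0 := by
    intro x₁
    split_ifs <;> simp
  rw [Finset.sum_congr rfl fun x₁ _ => pull x₁]
  rw [Finset.sum_comm]
  have step : ∀ x : Fin (m + 1) → 𝒳,
      (∑ x₁ : 𝒳, if g x₁ = y₀ then
          (if x 0 = x₁ ∧ ∀ i : Fin m, g (x i.succ) = y i then xPath π P (m + 1) x else 0) else 0)
      = if g (x 0) = y₀ ∧ ∀ i : Fin m, g (x i.succ) = y i then xPath π P (m + 1) x else 0 := by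
    intro x
    have : ∀ x₁ : 𝒳, (if g x₁ = y₀ then
        (if x 0 = x₁ ∧ ∀ i : Fin m, g (x i.succ) = y i then xPath π P (m + 1) x else 0) else 0)
        = if x 0 = x₁ then
            (if g (x 0) = y₀ ∧ ∀ i : Fin m, g (x i.succ) = y i
              then xPath π P (m + 1) x else 0) else 0 := by
      intro x₁
      rcases eq_or_ne (x 0) x₁ with h | h
      · subst h
        split_ifs <;> tauto
      · simp [h, Ne.symm h]
    rw [Finset.sum_congr rfl fun x₁ _ => this x₁]
    rw [Finset.sum_ite_eq Finset.univ (x 0)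
      (fun _ => if g (x 0) = y₀ ∧ ∀ i : Fin m, g (x i.succ) = y i
          then xPath π P (m + 1) x else 0)]
    simp
  rw [Finset.sum_congr rfl fun x _ => step x, yPath]
  refine Finset.sum_congr rfl fun x _ => ?_
  congr 1
  apply propext
  rw [Fin.forall_fin_succ]
  simp only [Fin.cons_zero, Fin.cons_succ]

/-- `xyPath` with initial distribution `π` factors the initial weight. -/
lemma xyPath_factor (m : ℕ) (x₀ : 𝒳) (y : Fin m → 𝒴) :
    xyPath π P g m x₀ y = π x₀ * xyPath (fun _ => (1 : ℝ)) P g m x₀ y := by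
  rw [xyPath, xyPath, Finset.mul_sum]
  refine Finset.sum_congr rfl fun x _ => ?_
  split_ifs with h
  · rw [xPath_eq, xPath_eq, h.1]
    ring
  · ring

/-- the Markov recursion for `xyPath`. -/
lemma xyPath_markov (m : ℕ) (x₁ : 𝒳) (z : Fin (m + 1) → 𝒴) :
    xyPath π P g (m + 1) x₁ z
      = π x₁ * ∑ x₂ : 𝒳, (if g x₂ = z 0 then
          P x₁ x₂ * xyPath (fun _ => (1 : ℝ)) P g m x₂ (Fin.tail z) else 0) := by
  classical
  -- LHS: reindex over cons
  rw [xyPath, ← (Fin.consEquiv (fun _ => 𝒳)).sum_comp]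
  have he : ∀ q : 𝒳 × (Fin (m + 1) → 𝒳),
      (Fin.consEquiv (fun _ => 𝒳)) q = Fin.cons q.1 q.2 := fun q => rfl
  have term : ∀ q : 𝒳 × (Fin (m + 1) → 𝒳),
      (if ((Fin.consEquiv (fun _ => 𝒳)) q) 0 = x₁ ∧
          ∀ i : Fin (m + 1), g (((Fin.consEquiv (fun _ => 𝒳)) q) i.succ) = z i
        then xPath π P (m + 2) ((Fin.consEquiv (fun _ => 𝒳)) q) else 0)
      = if q.1 = x₁ then (if ∀ i : Fin (m + 1), g (q.2 i) = z i
          then π x₁ * (P x₁ (q.2 0) *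
            ∏ i : Fin m, P (q.2 i.castSucc) (q.2 i.succ)) else 0) else 0 := by
    intro q
    rw [he, xPath_cons]
    simp only [Fin.cons_zero, Fin.cons_succ]
    by_cases h0 : q.1 = x₁
    · by_cases hC : ∀ i : Fin (m + 1), g (q.2 i) = z i
      · rw [if_pos ⟨h0, hC⟩, if_pos h0, if_pos hC, h0]
        ring
      · rw [if_neg (fun hh => hC hh.2), if_pos h0, if_neg hC]
    · rw [if_neg (fun hh => h0 hh.1), if_neg h0]
  rw [Finset.sum_congr rfl fun q _ => term q]
  rw [Fintype.sum_prod_type]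
  have pull2 : ∀ x₀ : 𝒳, (∑ x' : Fin (m + 1) → 𝒳, if x₀ = x₁ then
        (if ∀ i : Fin (m + 1), g (x' i) = z i
          then π x₁ * (P x₁ (x' 0) * ∏ i : Fin m, P (x' i.castSucc) (x' i.succ))
          else 0) else 0)
      = if x₀ = x₁ then (∑ x' : Fin (m + 1) → 𝒳, if ∀ i : Fin (m + 1), g (x' i) = z i
          then π x₁ * (P x₁ (x' 0) * ∏ i : Fin m, P (x' i.castSucc) (x' i.succ))
          else 0) else 0 := by
    intro x₀
    split_ifs <;> simp
  rw [Finset.sum_congr rfl fun x₀ _ => pull2 x₀]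
  rw [Finset.sum_ite_eq' Finset.univ x₁, if_pos (Finset.mem_univ x₁)]
  -- RHS: unfold xyPath and merge the x₂ sum
  have rhs : ∀ x₂ : 𝒳, (if g x₂ = z 0 then
      P x₁ x₂ * xyPath (fun _ => (1 : ℝ)) P g m x₂ (Fin.tail z) else 0)
      = ∑ w : Fin (m + 1) → 𝒳, (if w 0 = x₂ then
          (if g (w 0) = z 0 ∧ ∀ i : Fin m, g (w i.succ) = z i.succ
            then P x₁ (w 0) * xPath (fun _ => (1 : ℝ)) P (m + 1) w else 0) else 0) := by
    intro x₂
    rw [xyPath, Finset.mul_sum]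
    split_ifs with hz
    · refine Finset.sum_congr rfl fun w _ => ?_
      rcases eq_or_ne (w 0) x₂ with hw | hw
      · rw [if_pos hw]
        by_cases hc : ∀ i : Fin m, g (w i.succ) = z i.succ
        · rw [if_pos ⟨hw, fun i => hc i⟩, if_pos ⟨by rw [hw]; exact hz, hc⟩, hw]
        · rw [if_neg (fun hh => hc (fun i => hh.2 i)), if_neg (fun hh => hc hh.2), mul_zero]
      · rw [if_neg (fun hh => hw hh.1), if_neg hw, mul_zero]
    · symm
      apply Finset.sum_eq_zero
      intro w _
      rcases eq_or_ne (w 0) x₂ with hw | hw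
      · rw [if_pos hw, if_neg (fun hh => hz (by rw [← hw]; exact hh.1))]
      · rw [if_neg hw]
  rw [Finset.sum_congr rfl fun x₂ _ => rhs x₂, Finset.sum_comm]
  have collapse : ∀ w : Fin (m + 1) → 𝒳,
      (∑ x₂ : 𝒳, if w 0 = x₂ then
          (if g (w 0) = z 0 ∧ ∀ i : Fin m, g (w i.succ) = z i.succ
            then P x₁ (w 0) * xPath (fun _ => (1 : ℝ)) P (m + 1) w else 0) else 0)
      = if g (w 0) = z 0 ∧ ∀ i : Fin m, g (w i.succ) = z i.succ
          then P x₁ (w 0) * xPath (fun _ => (1 : ℝ)) P (m + 1) w else 0 := by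
    intro w
    rw [Finset.sum_ite_eq Finset.univ (w 0)]
    simp
  rw [Finset.sum_congr rfl fun w _ => collapse w, Finset.mul_sum]
  refine Finset.sum_congr rfl fun w _ => ?_
  have hiff : (∀ i : Fin (m + 1), g (w i) = z i)
      ↔ (g (w 0) = z 0 ∧ ∀ i : Fin m, g (w i.succ) = z i.succ) := Fin.forall_fin_succ
  rw [xPath_eq]
  split_ifs with h1 h2 h3
  · ring
  · exact absurd (hiff.mp h1) h2
  · exact absurd (hiff.mpr h3) h1
  · rw [mul_zero]

lemma cons_eq_iff' {α : Type*} {m : ℕ} (a : α) (y : Fin m → α) (z : Fin (m + 1) → α) :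
    Fin.cons a y = z ↔ a = z 0 ∧ y = Fin.tail z := by
  constructor
  · intro h
    subst h
    exact ⟨by simp, by simp⟩
  · rintro ⟨h1, h2⟩
    subst h1
    subst h2
    exact Fin.cons_self_tail z

lemma sum_cons_fiber (m : ℕ) (F : 𝒳 → (Fin m → 𝒴) → ℝ) (z : Fin (m + 1) → 𝒴) :
    ∑ r : 𝒳 × (Fin m → 𝒴), (if Fin.cons (g r.1) r.2 = z then F r.1 r.2 else 0)
      = ∑ x₁ : 𝒳, (if g x₁ = z 0 then F x₁ (Fin.tail z) else 0) := by
  classical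
  rw [Fintype.sum_prod_type]
  refine Finset.sum_congr rfl fun x₁ _ => ?_
  have key : ∀ y : Fin m → 𝒴, (if Fin.cons (g x₁) y = z then F x₁ y else 0)
      = if y = Fin.tail z then (if g x₁ = z 0 then F x₁ y else 0) else 0 := by
    intro y
    by_cases h1 : g x₁ = z 0 <;> by_cases h2 : y = Fin.tail z <;>
      simp [cons_eq_iff', h1, h2]
  rw [Finset.sum_congr rfl fun y _ => key y]
  rw [Finset.sum_ite_eq' Finset.univ (Fin.tail z)
    (fun y => if g x₁ = z 0 then F x₁ y else 0)]
  simp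

/-- pushforward of the (X₁, Y₂ᵏ⁺¹)-conditioned joint under `(x,y) ↦ cons (g x) y`. -/
lemma push_xy_to_y (m : ℕ) (a : 𝒴) (y' : Fin (m + 1) → 𝒴) :
    (∑ c : 𝒳 × (Fin m → 𝒴), if Fin.cons (g c.1) c.2 = y'
        then xyPath π P g (m + 1) c.1 (Fin.snoc c.2 a) else 0)
      = yPath π P g (m + 2) (Fin.snoc y' a) := by
  rw [sum_cons_fiber g m (fun x y => xyPath π P g (m + 1) x (Fin.snoc y a)) y']
  rw [sum_xyPath_head π P g (m + 1) (y' 0) (Fin.snoc (Fin.tail y') a)]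
  congr 1
  rw [Fin.cons_snoc_eq_snoc_cons, Fin.cons_self_tail]

/-- pushforward of the full (X₁, Y₂ᵐ⁺¹) law under `(x,y) ↦ cons (g x) y` is the law of Y₁ᵐ⁺¹. -/
lemma push_xy_full (m : ℕ) (z : Fin (m + 1) → 𝒴) :
    (∑ c : 𝒳 × (Fin m → 𝒴), if Fin.cons (g c.1) c.2 = z then xyPath π P g m c.1 c.2 else 0)
      = yPath π P g (m + 1) z := by
  rw [sum_cons_fiber g m (fun x y => xyPath π P g m x y) z]
  rw [sum_xyPath_head π P g m (z 0) (Fin.tail z), Fin.cons_self_tail]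

lemma push_fst_cons (hμ2 : ∀ j, ∑ i : 𝒳, μ i * P i j = μ j) (k : ℕ) (a : 𝒴)
    (y : Fin (k + 1) → 𝒴) :
    (∑ c : (Fin (k + 1) → 𝒴) × 𝒴, if c.1 = y then
        yPath μ P g (k + 3) (Fin.cons c.2 (Fin.snoc c.1 a)) else 0)
      = yPath μ P g (k + 2) (Fin.snoc y a) := by
  classical
  rw [Fintype.sum_prod_type]
  have pull : ∀ w : Fin (k + 1) → 𝒴,
      (∑ y₀ : 𝒴, if w = y then yPath μ P g (k + 3) (Fin.cons y₀ (Fin.snoc w a)) else 0)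
      = if w = y then (∑ y₀ : 𝒴, yPath μ P g (k + 3) (Fin.cons y₀ (Fin.snoc w a))) else 0 := by
    intro w
    split_ifs <;> simp
  rw [Finset.sum_congr rfl fun w _ => pull w]
  rw [Finset.sum_ite_eq' Finset.univ y
    (fun w => ∑ y₀ : 𝒴, yPath μ P g (k + 3) (Fin.cons y₀ (Fin.snoc w a)))]
  rw [if_pos (Finset.mem_univ y)]
  exact sum_yPath_cons μ P g hμ2 (k + 1) (Fin.snoc y a)

lemma push_markov (hμ2 : ∀ j, ∑ i : 𝒳, μ i * P i j = μ j) (k : ℕ) (a : 𝒴) (x₁' : 𝒳)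
    (y' : Fin (k + 1) → 𝒴) :
    (∑ c : (𝒳 × (Fin k → 𝒴)) × 𝒳,
      if (c.2, Fin.cons (g c.1.1) c.1.2) = (x₁', y')
      then xyPath (fun _ => (1 : ℝ)) P g (k + 1) c.1.1 (Fin.snoc c.1.2 a)
        * (μ c.2 * P c.2 c.1.1) else 0)
      = xyPath μ P g (k + 2) x₁' (Fin.snoc y' a) := by
  classical
  rw [Fintype.sum_prod_type]
  have step1 : ∀ bc : 𝒳 × (Fin k → 𝒴),
      (∑ x₁ : 𝒳, if (x₁, Fin.cons (g bc.1) bc.2) = (x₁', y')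
        then xyPath (fun _ => (1 : ℝ)) P g (k + 1) bc.1 (Fin.snoc bc.2 a)
          * (μ x₁ * P x₁ bc.1) else 0)
      = if Fin.cons (g bc.1) bc.2 = y'
          then xyPath (fun _ => (1 : ℝ)) P g (k + 1) bc.1 (Fin.snoc bc.2 a)
            * (μ x₁' * P x₁' bc.1) else 0 := by
    intro bc
    have key : ∀ x₁ : 𝒳, (if (x₁, Fin.cons (g bc.1) bc.2) = (x₁', y')
        then xyPath (fun _ => (1 : ℝ)) P g (k + 1) bc.1 (Fin.snoc bc.2 a)
          * (μ x₁ * P x₁ bc.1) else 0)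
        = if x₁ = x₁' then (if Fin.cons (g bc.1) bc.2 = y'
            then xyPath (fun _ => (1 : ℝ)) P g (k + 1) bc.1 (Fin.snoc bc.2 a)
              * (μ x₁ * P x₁ bc.1) else 0) else 0 := by
      intro x₁
      by_cases hx : x₁ = x₁'
      · subst hx
        by_cases hc : Fin.cons (g bc.1) bc.2 = y'
        · rw [if_pos (by rw [hc]), if_pos rfl, if_pos hc]
        · rw [if_neg (fun hh => hc (Prod.ext_iff.mp hh).2), if_pos rfl, if_neg hc]
      · rw [if_neg (fun hh => hx (Prod.ext_iff.mp hh).1), if_neg hx]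
    rw [Finset.sum_congr rfl fun x₁ _ => key x₁]
    rw [Finset.sum_ite_eq' Finset.univ x₁'
      (fun x₁ => if Fin.cons (g bc.1) bc.2 = y'
        then xyPath (fun _ => (1 : ℝ)) P g (k + 1) bc.1 (Fin.snoc bc.2 a)
          * (μ x₁ * P x₁ bc.1) else 0)]
    rw [if_pos (Finset.mem_univ x₁')]
  rw [Finset.sum_congr rfl fun bc _ => step1 bc]
  rw [sum_cons_fiber g k
    (fun x₂ y => xyPath (fun _ => (1 : ℝ)) P g (k + 1) x₂ (Fin.snoc y a)
      * (μ x₁' * P x₁' x₂)) y']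
  rw [xyPath_markov μ P g (k + 1) x₁' (Fin.snoc y' a)]
  rw [snoc_head k y' a, tail_snoc k y' a, Finset.mul_sum]
  refine Finset.sum_congr rfl fun x₂ _ => ?_
  split_ifs with h
  · ring
  · rw [mul_zero]


/-- `snoc` as an equivalence. -/
def eSnocY (k : ℕ) : 𝒴 × (Fin (k + 1) → 𝒴) ≃ (Fin (k + 2) → 𝒴) where
  toFun q := Fin.snoc q.2 q.1
  invFun z := (z (Fin.last (k + 1)), Fin.init z)
  left_inv q := by simp
  right_inv z := by simp

/-- `cons` (in the second coordinate) as an equivalence. -/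
def eConsY (k : ℕ) : (Fin (k + 1) → 𝒴) × 𝒴 ≃ (Fin (k + 2) → 𝒴) where
  toFun q := Fin.cons q.2 q.1
  invFun z := (Fin.tail z, z 0)
  left_inv q := by simp
  right_inv z := by simp

/-- reassociation equivalence for the `xyPath` joint. -/
def eXY (k : ℕ) : 𝒴 × (𝒳 × (Fin k → 𝒴)) ≃ 𝒳 × (Fin (k + 1) → 𝒴) where
  toFun q := (q.2.1, Fin.snoc q.2.2 q.1)
  invFun r := (r.2 (Fin.last k), (r.1, Fin.init r.2))
  left_inv q := by simp
  right_inv r := by simp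


end StmtAux

end MarkovAggregation

open StmtAux in
/-- the lumpability cost is non-increasing in the order, Δ_L^k ≥ Δ_L^{k+1}
for every k ≥ 1, and Δ_L^k(X, g) → 0 as k → ∞.  (Here `lumpCost μ P g k` is Δ_L^{k+1}, so the
monotonicity statement below ranges over all orders ≥ 1.) -/
theorem stmt10 {𝒳 𝒴 : Type*} [Fintype 𝒳] [DecidableEq 𝒳] [Fintype 𝒴] [DecidableEq 𝒴]
    (P : Matrix 𝒳 𝒳 ℝ) (hP0 : ∀ i j, 0 ≤ P i j) (hP1 : ∀ i, ∑ j : 𝒳, P i j = 1)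
    (hprim : PrimitiveMatrix P)
    (μ : 𝒳 → ℝ) (hμ0 : ∀ x, 0 ≤ μ x) (hμ1 : ∑ x : 𝒳, μ x = 1)
    (hμ2 : ∀ j, ∑ i : 𝒳, μ i * P i j = μ j) (g : 𝒳 → 𝒴) :
    (∀ k : ℕ, lumpCost μ P g (k + 1) ≤ lumpCost μ P g k) ∧
    Tendsto (fun k : ℕ => lumpCost μ P g k) atTop (nhds 0) := by
  classical
  have hxy0 : ∀ (m : ℕ) (x₀ : 𝒳) (y : Fin m → 𝒴), 0 ≤ xyPath μ P g m x₀ y :=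
    fun m x₀ y => xyPath_nonneg μ P g hμ0 hP0 m x₀ y
  have h1c : ∀ x : 𝒳, (0:ℝ) ≤ (fun _ : 𝒳 => (1:ℝ)) x := fun _ => zero_le_one
  set Hy : ℕ → ℝ := fun n => entPMF (yPath μ P g n) with hHy
  set Hxy : ℕ → ℝ := fun m =>
    entPMF (fun q : 𝒳 × (Fin m → 𝒴) => xyPath μ P g m q.1 q.2) with hHxy
  set A : ℕ → ℝ := fun k => condEntPMF
      (fun q : 𝒴 × (Fin (k + 1) → 𝒴) => yPath μ P g (k + 2) (Fin.snoc q.2 q.1)) with hA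
  set B : ℕ → ℝ := fun k => condEntPMF
      (fun q : 𝒴 × (𝒳 × (Fin k → 𝒴)) =>
        xyPath μ P g (k + 1) q.2.1 (Fin.snoc q.2.2 q.1)) with hB
  have hLC : ∀ k, lumpCost μ P g k = A k - B k := fun k => rfl
  -- A k = H(Y₁^{k+2}) - H(Y₁^{k+1})
  have hAk : ∀ k, A k = Hy (k + 2) - Hy (k + 1) := by
    intro k
    simp only [hA, hHy]
    have hmarg : margSnd (fun q : 𝒴 × (Fin (k + 1) → 𝒴) =>
        yPath μ P g (k + 2) (Fin.snoc q.2 q.1)) = yPath μ P g (k + 1) := by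
      funext y
      simp only [margSnd]
      exact sum_yPath_snoc μ P g hP1 k y
    rw [condEntPMF, hmarg]
    congr 1
    exact Fintype.sum_equiv (eSnocY k) _ _ (fun q => rfl)
  -- B k = H(X₁, Y₂^{k+2}) - H(X₁, Y₂^{k+1})
  have hBk : ∀ k, B k = Hxy (k + 1) - Hxy k := by
    intro k
    simp only [hB, hHxy]
    have hmarg : margSnd (fun q : 𝒴 × (𝒳 × (Fin k → 𝒴)) =>
        xyPath μ P g (k + 1) q.2.1 (Fin.snoc q.2.2 q.1))
        = fun r : 𝒳 × (Fin k → 𝒴) => xyPath μ P g k r.1 r.2 := by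
      funext r
      simp only [margSnd]
      exact sum_xyPath_snoc μ P g hP1 k r.1 r.2
    rw [condEntPMF, hmarg]
    congr 1
    exact Fintype.sum_equiv (eXY k) _ _ (fun q => rfl)
  -- B k ≤ A k
  have hF3 : ∀ k, B k ≤ A k := by
    intro k
    have step := condEnt_le_push
      (fun q : 𝒴 × (𝒳 × (Fin k → 𝒴)) => xyPath μ P g (k + 1) q.2.1 (Fin.snoc q.2.2 q.1))
      (fun q => hxy0 _ _ _)
      (fun r : 𝒳 × (Fin k → 𝒴) => (Fin.cons (g r.1) r.2 : Fin (k + 1) → 𝒴))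
    refine le_trans step (le_of_eq ?_)
    apply congrArg condEntPMF
    funext q
    exact push_xy_to_y μ P g k q.1 q.2
  -- A (k+1) ≤ A k
  have hF1 : ∀ k, A (k + 1) ≤ A k := by
    intro k
    have e1 : condEntPMF (fun q : 𝒴 × ((Fin (k + 1) → 𝒴) × 𝒴) =>
        yPath μ P g (k + 3) (Fin.cons q.2.2 (Fin.snoc q.2.1 q.1))) = A (k + 1) := by
      simp only [hA]
      refine Eq.trans ?_ (condEntPMF_equiv (eConsY k)
        (fun q : 𝒴 × (Fin (k + 2) → 𝒴) => yPath μ P g (k + 1 + 2) (Fin.snoc q.2 q.1)))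
      apply congrArg condEntPMF
      funext q
      show yPath μ P g (k + 3) (Fin.cons q.2.2 (Fin.snoc q.2.1 q.1))
        = yPath μ P g (k + 3) (Fin.snoc (Fin.cons q.2.2 q.2.1) q.1)
      exact congrArg _ (Fin.cons_snoc_eq_snoc_cons q.2.2 q.2.1 q.1)
    have step := condEnt_le_push
      (fun q : 𝒴 × ((Fin (k + 1) → 𝒴) × 𝒴) =>
        yPath μ P g (k + 3) (Fin.cons q.2.2 (Fin.snoc q.2.1 q.1)))
      (fun q => yPath_nonneg μ P g hμ0 hP0 _ _)
      (Prod.fst : (Fin (k + 1) → 𝒴) × 𝒴 → (Fin (k + 1) → 𝒴))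
    rw [e1] at step
    refine le_trans step (le_of_eq ?_)
    apply congrArg condEntPMF
    funext q
    exact push_fst_cons μ P g hμ2 k q.1 q.2
  -- B k ≤ B (k+1)
  have hF2 : ∀ k, B k ≤ B (k + 1) := by
    intro k
    have hfac := condEnt_factor
      (fun b : 𝒳 × (Fin k → 𝒴) => fun a : 𝒴 =>
        xyPath (fun _ => (1:ℝ)) P g (k + 1) b.1 (Fin.snoc b.2 a))
      (fun c : 𝒳 => fun b : 𝒳 × (Fin k → 𝒴) => μ c * P c b.1)
    have e1 : condEntPMF (fun q : 𝒴 × (𝒳 × (Fin k → 𝒴)) =>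
        (fun b : 𝒳 × (Fin k → 𝒴) => fun a : 𝒴 =>
          xyPath (fun _ => (1:ℝ)) P g (k + 1) b.1 (Fin.snoc b.2 a)) q.2 q.1
          * (∑ c : 𝒳, (fun c : 𝒳 => fun b : 𝒳 × (Fin k → 𝒴) => μ c * P c b.1) c q.2))
        = B k := by
      apply congrArg condEntPMF
      funext q
      show xyPath (fun _ => (1:ℝ)) P g (k + 1) q.2.1 (Fin.snoc q.2.2 q.1)
          * (∑ c : 𝒳, μ c * P c q.2.1)
        = xyPath μ P g (k + 1) q.2.1 (Fin.snoc q.2.2 q.1)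
      rw [hμ2 q.2.1, xyPath_factor μ P g (k + 1) q.2.1 (Fin.snoc q.2.2 q.1), mul_comm]
    have step := condEnt_le_push
      (fun q : 𝒴 × ((𝒳 × (Fin k → 𝒴)) × 𝒳) =>
        xyPath (fun _ => (1:ℝ)) P g (k + 1) q.2.1.1 (Fin.snoc q.2.1.2 q.1)
          * (μ q.2.2 * P q.2.2 q.2.1.1))
      (fun q => mul_nonneg (xyPath_nonneg (fun _ => (1:ℝ)) P g h1c hP0 _ _ _)
        (mul_nonneg (hμ0 _) (hP0 _ _)))
      (fun c : (𝒳 × (Fin k → 𝒴)) × 𝒳 =>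
        ((c.2, Fin.cons (g c.1.1) c.1.2) : 𝒳 × (Fin (k + 1) → 𝒴)))
    calc B k = condEntPMF (fun q : 𝒴 × ((𝒳 × (Fin k → 𝒴)) × 𝒳) =>
          xyPath (fun _ => (1:ℝ)) P g (k + 1) q.2.1.1 (Fin.snoc q.2.1.2 q.1)
            * (μ q.2.2 * P q.2.2 q.2.1.1)) := (hfac.trans e1).symm
      _ ≤ _ := step
      _ = B (k + 1) := by
          apply congrArg condEntPMF
          funext q
          exact push_markov μ P g hμ2 k q.1 q.2.1 q.2.2
  -- H(Y₁^{m+1}) ≤ H(X₁, Y₂^{m+1})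
  have hF6 : ∀ m, Hy (m + 1) ≤ Hxy m := by
    intro m
    simp only [hHy, hHxy]
    have step := entPMF_push_le
      (fun r : 𝒳 × (Fin m → 𝒴) => (Fin.cons (g r.1) r.2 : Fin (m + 1) → 𝒴))
      (fun r : 𝒳 × (Fin m → 𝒴) => xyPath μ P g m r.1 r.2) (fun r => hxy0 m r.1 r.2)
    refine le_trans (le_of_eq ?_) step
    apply congrArg entPMF
    funext z
    exact (push_xy_full μ P g m z).symm
  -- assemble
  have hmono : ∀ k, lumpCost μ P g (k + 1) ≤ lumpCost μ P g k := by
    intro k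
    rw [hLC, hLC]
    have h1 := hF1 k
    have h2 := hF2 k
    linarith
  have hnn : ∀ k, 0 ≤ lumpCost μ P g k := by
    intro k
    rw [hLC]
    have := hF3 k
    linarith
  refine ⟨hmono, ?_⟩
  have htel : ∀ n : ℕ, ∑ k ∈ Finset.range n, lumpCost μ P g k
      = (Hy (n + 1) - Hy 1) - (Hxy n - Hxy 0) := by
    intro n
    induction n with
    | zero => simp
    | succ n ih =>
      rw [Finset.sum_range_succ, ih, hLC, hAk n, hBk n]
      ring
  have hbound : ∀ n : ℕ, ∑ k ∈ Finset.range n, lumpCost μ P g k ≤ Hxy 0 - Hy 1 := by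
    intro n
    rw [htel n]
    have := hF6 n
    linarith
  have hanti : Antitone (fun k => lumpCost μ P g k) := antitone_nat_of_succ_le hmono
  have hdiv : ∀ n : ℕ, lumpCost μ P g n ≤ (Hxy 0 - Hy 1) / ((n : ℝ) + 1) := by
    intro n
    have hc : (Finset.range (n + 1)).card • lumpCost μ P g n
        ≤ ∑ k ∈ Finset.range (n + 1), lumpCost μ P g k := by
      apply Finset.card_nsmul_le_sum
      intro i hi
      exact hanti (Nat.lt_succ_iff.mp (Finset.mem_range.mp hi))
    rw [Finset.card_range, nsmul_eq_mul] at hc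
    have hpos : (0:ℝ) < (n : ℝ) + 1 := by positivity
    rw [le_div_iff₀ hpos]
    push_cast at hc
    calc lumpCost μ P g n * ((n : ℝ) + 1) = ((n : ℝ) + 1) * lumpCost μ P g n := by ring
      _ ≤ ∑ k ∈ Finset.range (n + 1), lumpCost μ P g k := hc
      _ ≤ Hxy 0 - Hy 1 := hbound (n + 1)
  have hlim : Tendsto (fun n : ℕ => (Hxy 0 - Hy 1) / ((n : ℝ) + 1)) atTop (nhds 0) := by
    apply Tendsto.div_atTop (tendsto_const_nhds)
    exact tendsto_atTop_add_const_right atTop 1 tendsto_natCast_atTop_atTop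
  exact squeeze_zero hnn hdiv hlim
end

section
/- Let X be an irreducible, aperiodic, stationary first-order Markov chain on the finite alphabet 𝒳 with stationary distribution μ, g: 𝒳 → 𝒴, Y_n := g(X_n), and let Y^(k) be the stationary k-th order Markov chain on 𝒴 with transition matrix Q_{i_1,...,i_k→j} = p_{Y_{k+1}|Y_1^k}(j|i_1,...,i_k). Define the μ-lifting X' as the stationary k-th order Markov chain on 𝒳 with transition matrix P̂_{i_1,...,i_k→j} = ( μ_j / Σ_{ℓ ∈ g^{-1}(g(j))} μ_ℓ ) · Q_{g(i_1),...,g(i_k)→g(j)}. Then, viewing X as the k-th order Markov chain with transition matrix P̃_{i_1,...,i_k→j} = P_{i_k→j}, the Kullback-Leibler divergence rate between X and X' equals the predictability cost: D̄(X‖X') = Δ_P^k(X, g). -/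
open Filter

section MarkovAggregation

variable {𝒳 : Type*} {𝒴 : Type*} [Fintype 𝒳] [DecidableEq 𝒳] [Fintype 𝒴] [DecidableEq 𝒴]

set_option linter.unusedSectionVars false

section AuxLemmas

lemma sum_snoc {α : Type*} [Fintype α] (n : ℕ) (F : (Fin (n+1) → α) → ℝ) :
    ∑ z : Fin (n+1) → α, F z = ∑ x : Fin n → α, ∑ j : α, F (Fin.snoc x j) := by
  calc ∑ z : Fin (n+1) → α, F z
      = ∑ p : α × (Fin n → α), F (Fin.snoc p.2 p.1) :=
        (Fintype.sum_equiv (Fin.snocEquiv (fun _ => α)) _ _ (fun p => by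
          simp [Fin.snocEquiv])).symm
    _ = ∑ j : α, ∑ x : Fin n → α, F (Fin.snoc x j) := by rw [Fintype.sum_prod_type]
    _ = ∑ x : Fin n → α, ∑ j : α, F (Fin.snoc x j) := Finset.sum_comm

lemma xPath_nonneg (π : 𝒳 → ℝ) (P : Matrix 𝒳 𝒳 ℝ) (hπ : ∀ x, 0 ≤ π x)
    (hP : ∀ i j, 0 ≤ P i j) (n : ℕ) (x : Fin n → 𝒳) : 0 ≤ xPath π P n x := by
  unfold xPath
  apply mul_nonneg
  · split <;> simp [hπ]
  · exact Finset.prod_nonneg (fun i _ => by split <;> simp [hP])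

lemma xPath_one (π : 𝒳 → ℝ) (P : Matrix 𝒳 𝒳 ℝ) (x : Fin 1 → 𝒳) :
    xPath π P 1 x = π (x 0) := by
  simp [xPath]

lemma xPath_snoc (π : 𝒳 → ℝ) (P : Matrix 𝒳 𝒳 ℝ) (k : ℕ) (x : Fin (k+1) → 𝒳) (j : 𝒳) :
    xPath π P (k+2) (Fin.snoc x j) = xPath π P (k+1) x * P (x (Fin.last k)) j := by
  unfold xPath
  have h0 : (Fin.snoc x j : Fin (k+2) → 𝒳) ⟨0, by omega⟩ = x ⟨0, by omega⟩ := by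
    have : (⟨0, by omega⟩ : Fin (k+2)) = Fin.castSucc ⟨0, by omega⟩ := rfl
    rw [this, Fin.snoc_castSucc]
  have hprod : (∏ i : Fin (k+2), if h : i.val + 1 < k+2 then
        P ((Fin.snoc x j : Fin (k+2) → 𝒳) i) ((Fin.snoc x j : Fin (k+2) → 𝒳) ⟨i.val + 1, h⟩) else 1)
      = (∏ i : Fin (k+1), if h : i.val + 1 < k+1 then P (x i) (x ⟨i.val + 1, h⟩) else 1)
        * P (x (Fin.last k)) j := by
    rw [Fin.prod_univ_castSucc (n := k+1)]
    have hlast1 : (if h : (Fin.last (k+1)).val + 1 < k+2 then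
        P ((Fin.snoc x j : Fin (k+2) → 𝒳) (Fin.last (k+1)))
          ((Fin.snoc x j : Fin (k+2) → 𝒳) ⟨(Fin.last (k+1)).val + 1, h⟩) else 1) = 1 := by
      rw [dif_neg]; simp [Fin.last]
    rw [hlast1, mul_one]
    have hpt : ∀ i : Fin (k+1),
        (if h : (Fin.castSucc i).val + 1 < k+2 then
          P ((Fin.snoc x j : Fin (k+2) → 𝒳) (Fin.castSucc i))
            ((Fin.snoc x j : Fin (k+2) → 𝒳) ⟨(Fin.castSucc i).val + 1, h⟩) else 1)
        = (if h : i.val + 1 < k+1 then P (x i) (x ⟨i.val + 1, h⟩) else 1)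
          * (if i = Fin.last k then P (x i) j else 1) := by
      intro i
      rcases eq_or_ne i (Fin.last k) with hi | hi
      · subst hi
        have hc : (Fin.castSucc (Fin.last k)).val + 1 < k + 2 := by simp [Fin.last]
        have hc2 : ¬ ((Fin.last k : Fin (k+1)).val + 1 < k+1) := by simp [Fin.last]
        rw [dif_pos hc, dif_neg hc2, if_pos rfl, one_mul, Fin.snoc_castSucc]
        congr 1
        have : (⟨(Fin.castSucc (Fin.last k)).val + 1, hc⟩ : Fin (k+2)) = Fin.last (k+1) := by
          simp [Fin.last, Fin.ext_iff]
        rw [this, Fin.snoc_last]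
      · have hik : i.val < k := by
          have := i.isLt
          have : i.val ≠ k := fun h => hi (Fin.ext h)
          omega
        have hcv : (Fin.castSucc i).val = i.val := rfl
        have hc : (Fin.castSucc i).val + 1 < k + 2 := by omega
        have hc2 : i.val + 1 < k+1 := by omega
        rw [dif_pos hc, dif_pos hc2, if_neg hi, mul_one, Fin.snoc_castSucc]
        congr 1
        have : (⟨(Fin.castSucc i).val + 1, hc⟩ : Fin (k+2))
            = Fin.castSucc ⟨i.val + 1, hc2⟩ := rfl
        rw [this, Fin.snoc_castSucc]
    rw [Finset.prod_congr rfl (fun i _ => hpt i), Finset.prod_mul_distrib]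
    congr 1
    rw [Finset.prod_ite_eq' Finset.univ (Fin.last k) (fun i => P (x i) j)]
    simp
  simp only [Nat.succ_pos, dif_pos, h0, hprod]
  ring

lemma lastMarg (μ : 𝒳 → ℝ) (P : Matrix 𝒳 𝒳 ℝ)
    (hμ2 : ∀ j, ∑ i : 𝒳, μ i * P i j = μ j) :
    ∀ (k : ℕ) (f : 𝒳 → ℝ),
      ∑ x : Fin (k+1) → 𝒳, xPath μ P (k+1) x * f (x (Fin.last k)) = ∑ i : 𝒳, μ i * f i := by
  intro k
  induction k with
  | zero =>
    intro f
    calc ∑ x : Fin (0+1) → 𝒳, xPath μ P (0+1) x * f (x (Fin.last 0))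
        = ∑ x : Fin 1 → 𝒳, (fun a => μ a * f a) ((Equiv.funUnique (Fin 1) 𝒳) x) := by
          refine Finset.sum_congr rfl (fun x _ => ?_)
          rw [xPath_one]
          rfl
      _ = ∑ a : 𝒳, μ a * f a := by
          exact Equiv.sum_comp (Equiv.funUnique (Fin 1) 𝒳) (fun a => μ a * f a)
  | succ k ih =>
    intro f
    rw [sum_snoc (k+1) (fun z => xPath μ P (k+2) z * f (z (Fin.last (k+1))))]
    have : ∀ x : Fin (k+1) → 𝒳, ∀ j : 𝒳,
        xPath μ P (k+2) (Fin.snoc x j) * f ((Fin.snoc x j : Fin (k+2) → 𝒳) (Fin.last (k+1)))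
        = xPath μ P (k+1) x * (P (x (Fin.last k)) j * f j) := by
      intro x j
      rw [Fin.snoc_last, xPath_snoc]; ring
    calc ∑ x : Fin (k+1) → 𝒳, ∑ j : 𝒳,
          xPath μ P (k+2) (Fin.snoc x j) * f ((Fin.snoc x j : Fin (k+2) → 𝒳) (Fin.last (k+1)))
        = ∑ x : Fin (k+1) → 𝒳, xPath μ P (k+1) x * ∑ j : 𝒳, P (x (Fin.last k)) j * f j := by
          refine Finset.sum_congr rfl (fun x _ => ?_)
          rw [Finset.mul_sum]
          exact Finset.sum_congr rfl (fun j _ => this x j)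
      _ = ∑ i : 𝒳, μ i * ∑ j : 𝒳, P i j * f j := by exact ih fun i => ∑ j : 𝒳, P i j * f j
      _ = ∑ j : 𝒳, μ j * f j := by
          simp_rw [Finset.mul_sum, ← mul_assoc]
          rw [Finset.sum_comm]
          simp_rw [← Finset.sum_mul, hμ2]

lemma mu_pos_of_xPath_pos (μ : 𝒳 → ℝ) (P : Matrix 𝒳 𝒳 ℝ)
    (hμ0 : ∀ x, 0 ≤ μ x) (hP0 : ∀ i j, 0 ≤ P i j)
    (hμ2 : ∀ j, ∑ i : 𝒳, μ i * P i j = μ j) :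
    ∀ (k : ℕ) (x : Fin (k+1) → 𝒳), 0 < xPath μ P (k+1) x → 0 < μ (x (Fin.last k)) := by
  intro k
  induction k with
  | zero =>
    intro x h
    rw [xPath_one] at h
    simpa [Fin.last] using h
  | succ k ih =>
    intro x h
    have hx : Fin.snoc (Fin.init x) (x (Fin.last (k+1))) = x := Fin.snoc_init_self x
    rw [← hx, xPath_snoc] at h
    have h1 : 0 < xPath μ P (k+1) (Fin.init x) := by
      rcases (mul_pos_iff.mp h) with ⟨a, _⟩ | ⟨a, b⟩
      · exact a
      · exact absurd b (not_lt.mpr (hP0 _ _))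
    have h2 : 0 < P (Fin.init x (Fin.last k)) (x (Fin.last (k+1))) := by
      rcases (mul_pos_iff.mp h) with ⟨_, b⟩ | ⟨a, _⟩
      · exact b
      · exact absurd a (not_lt.mpr (xPath_nonneg μ P hμ0 hP0 _ _))
    have := ih (Fin.init x) h1
    calc (0:ℝ) < μ (Fin.init x (Fin.last k)) * P (Fin.init x (Fin.last k)) (x (Fin.last (k+1))) :=
          mul_pos this h2
      _ ≤ ∑ i : 𝒳, μ i * P i (x (Fin.last (k+1))) :=
          Finset.single_le_sum (f := fun i => μ i * P i (x (Fin.last (k+1))))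
            (fun i _ => mul_nonneg (hμ0 i) (hP0 _ _)) (Finset.mem_univ _)
      _ = μ (x (Fin.last (k+1))) := hμ2 _

lemma snoc_cond {k : ℕ} (g : 𝒳 → 𝒴) (x : Fin (k+1) → 𝒳) (j : 𝒳) (y : Fin (k+1) → 𝒴) (b : 𝒴) :
    (∀ i : Fin (k+2), g ((Fin.snoc x j : Fin (k+2) → 𝒳) i) = (Fin.snoc y b : Fin (k+2) → 𝒴) i)
      ↔ ((∀ i : Fin (k+1), g (x i) = y i) ∧ g j = b) := by
  constructor
  · intro h
    refine ⟨fun i => ?_, ?_⟩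
    · have := h i.castSucc
      simpa [Fin.snoc_castSucc] using this
    · have := h (Fin.last (k+1))
      simpa [Fin.snoc_last] using this
  · rintro ⟨h1, h2⟩ i
    induction i using Fin.lastCases with
    | last => simpa [Fin.snoc_last] using h2
    | cast i => simpa [Fin.snoc_castSucc] using h1 i

lemma yPath_nonneg (π : 𝒳 → ℝ) (P : Matrix 𝒳 𝒳 ℝ) (g : 𝒳 → 𝒴) (hπ : ∀ x, 0 ≤ π x)
    (hP : ∀ i j, 0 ≤ P i j) (n : ℕ) (y : Fin n → 𝒴) : 0 ≤ yPath π P g n y := by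
  refine Finset.sum_nonneg (fun x _ => ?_)
  split
  · exact xPath_nonneg π P hπ hP n x
  · exact le_refl 0

lemma yPath_snoc_eq (μ : 𝒳 → ℝ) (P : Matrix 𝒳 𝒳 ℝ) (g : 𝒳 → 𝒴) (k : ℕ)
    (y : Fin (k+1) → 𝒴) (b : 𝒴) :
    yPath μ P g (k+2) (Fin.snoc y b) = ∑ x : Fin (k+1) → 𝒳, ∑ j : 𝒳,
      if (∀ i, g (x i) = y i) ∧ g j = b then xPath μ P (k+1) x * P (x (Fin.last k)) j else 0 := by
  unfold yPath
  rw [sum_snoc (k+1) (fun z => if ∀ i, g (z i) = (Fin.snoc y b : Fin (k+2) → 𝒴) i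
    then xPath μ P (k+2) z else 0)]
  refine Finset.sum_congr rfl (fun x _ => Finset.sum_congr rfl (fun j _ => ?_))
  rw [if_congr (snoc_cond g x j y b) (xPath_snoc μ P k x j) rfl]

lemma yPath_marg_last (μ : 𝒳 → ℝ) (P : Matrix 𝒳 𝒳 ℝ) (g : 𝒳 → 𝒴)
    (hP1 : ∀ i, ∑ j : 𝒳, P i j = 1) (k : ℕ) (y : Fin (k+1) → 𝒴) :
    ∑ b : 𝒴, yPath μ P g (k+2) (Fin.snoc y b) = yPath μ P g (k+1) y := by
  simp_rw [yPath_snoc_eq]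
  rw [Finset.sum_comm]
  unfold yPath
  refine Finset.sum_congr rfl (fun x _ => ?_)
  rw [Finset.sum_comm]
  simp_rw [ite_and]
  have h1 : ∀ j : 𝒳, ∑ b : 𝒴, (if (∀ i, g (x i) = y i) then
      (if g j = b then xPath μ P (k+1) x * P (x (Fin.last k)) j else 0) else 0)
      = if (∀ i, g (x i) = y i) then xPath μ P (k+1) x * P (x (Fin.last k)) j else 0 := by
    intro j
    split
    · rw [Finset.sum_ite_eq Finset.univ (g j)
        (fun _ => xPath μ P (k+1) x * P (x (Fin.last k)) j)]
      simp
    · simp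
  rw [Finset.sum_congr rfl (fun j _ => h1 j)]
  split
  · rw [← Finset.mul_sum, hP1, mul_one]
  · simp

lemma yPath_marg_first (μ : 𝒳 → ℝ) (P : Matrix 𝒳 𝒳 ℝ) (g : 𝒳 → 𝒴)
    (hμ2 : ∀ j, ∑ i : 𝒳, μ i * P i j = μ j) (k : ℕ) (b : 𝒴) :
    ∑ y : Fin (k+1) → 𝒴, yPath μ P g (k+2) (Fin.snoc y b)
      = ∑ ℓ : 𝒳, if g ℓ = b then μ ℓ else 0 := by
  simp_rw [yPath_snoc_eq]
  rw [Finset.sum_comm]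
  have h1 : ∀ x : Fin (k+1) → 𝒳, ∑ y : Fin (k+1) → 𝒴, ∑ j : 𝒳,
      (if (∀ i, g (x i) = y i) ∧ g j = b then xPath μ P (k+1) x * P (x (Fin.last k)) j else 0)
      = ∑ j : 𝒳, if g j = b then xPath μ P (k+1) x * P (x (Fin.last k)) j else 0 := by
    intro x
    rw [Finset.sum_comm]
    refine Finset.sum_congr rfl (fun j _ => ?_)
    have : ∀ y : Fin (k+1) → 𝒴, ((∀ i, g (x i) = y i) ∧ g j = b)
        ↔ ((fun i => g (x i)) = y ∧ g j = b) := by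
      intro y
      rw [funext_iff]
    simp_rw [if_congr (this _) rfl rfl, ite_and]
    rw [Finset.sum_ite_eq Finset.univ (fun i => g (x i))
      (fun _ => if g j = b then xPath μ P (k+1) x * P (x (Fin.last k)) j else 0)]
    simp
  rw [Finset.sum_congr rfl (fun x _ => h1 x), Finset.sum_comm]
  refine Finset.sum_congr rfl (fun j _ => ?_)
  split
  · exact (lastMarg μ P hμ2 k (fun i => P i j)).trans (hμ2 j)
  · simp

lemma xPath_le_yPath (μ : 𝒳 → ℝ) (P : Matrix 𝒳 𝒳 ℝ) (g : 𝒳 → 𝒴) (hμ0 : ∀ x, 0 ≤ μ x)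
    (hP0 : ∀ i j, 0 ≤ P i j) (n : ℕ) (x : Fin n → 𝒳) :
    xPath μ P n x ≤ yPath μ P g n (fun i => g (x i)) := by
  have h := Finset.single_le_sum
    (f := fun z : Fin n → 𝒳 => if ∀ i, g (z i) = g (x i) then xPath μ P n z else 0)
    (fun z _ => by split; exacts [xPath_nonneg μ P hμ0 hP0 n z, le_refl 0])
    (Finset.mem_univ x)
  simpa [yPath] using h

lemma xPathP_le_yPath_snoc (μ : 𝒳 → ℝ) (P : Matrix 𝒳 𝒳 ℝ) (g : 𝒳 → 𝒴) (hμ0 : ∀ x, 0 ≤ μ x)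
    (hP0 : ∀ i j, 0 ≤ P i j) (k : ℕ) (x : Fin (k+1) → 𝒳) (j : 𝒳) :
    xPath μ P (k+1) x * P (x (Fin.last k)) j
      ≤ yPath μ P g (k+2) (Fin.snoc (fun i => g (x i)) (g j)) := by
  have h := Finset.single_le_sum
    (f := fun z : Fin (k+2) → 𝒳 =>
      if ∀ i, g (z i) = (Fin.snoc (fun i => g (x i)) (g j) : Fin (k+2) → 𝒴) i
        then xPath μ P (k+2) z else 0)
    (fun z _ => by split; exacts [xPath_nonneg μ P hμ0 hP0 _ z, le_refl 0])
    (Finset.mem_univ (Fin.snoc x j))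
  rw [if_pos ((snoc_cond g x j _ _).mpr ⟨fun i => rfl, rfl⟩), xPath_snoc] at h
  exact h

lemma mu_last_pos (μ : 𝒳 → ℝ) (P : Matrix 𝒳 𝒳 ℝ)
    (hμ0 : ∀ x, 0 ≤ μ x) (hP0 : ∀ i j, 0 ≤ P i j)
    (hμ2 : ∀ j, ∑ i : 𝒳, μ i * P i j = μ j) (k : ℕ) (x : Fin (k+1) → 𝒳) (j : 𝒳)
    (h : 0 < xPath μ P (k+1) x * P (x (Fin.last k)) j) : 0 < μ j := by
  have h1 : 0 < xPath μ P (k+1) x := by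
    rcases mul_pos_iff.mp h with ⟨a, _⟩ | ⟨_, b⟩
    · exact a
    · exact absurd b (not_lt.mpr (hP0 _ _))
  have h2 : 0 < P (x (Fin.last k)) j := by
    rcases mul_pos_iff.mp h with ⟨_, b⟩ | ⟨a, _⟩
    · exact b
    · exact absurd a (not_lt.mpr (xPath_nonneg μ P hμ0 hP0 _ _))
  have h3 := mu_pos_of_xPath_pos μ P hμ0 hP0 hμ2 k x h1
  calc (0:ℝ) < μ (x (Fin.last k)) * P (x (Fin.last k)) j := mul_pos h3 h2
    _ ≤ ∑ i : 𝒳, μ i * P i j :=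
        Finset.single_le_sum (f := fun i => μ i * P i j)
          (fun i _ => mul_nonneg (hμ0 i) (hP0 _ _)) (Finset.mem_univ _)
    _ = μ j := hμ2 j

/-- pointwise decomposition of the KL summand -/

lemma pointwise_decomp (μ : 𝒳 → ℝ) (P : Matrix 𝒳 𝒳 ℝ) (g : 𝒳 → 𝒴)
    (hμ0 : ∀ x, 0 ≤ μ x) (hP0 : ∀ i j, 0 ≤ P i j)
    (hμ2 : ∀ j, ∑ i : 𝒳, μ i * P i j = μ j) (k : ℕ) (x : Fin (k+1) → 𝒳) (j : 𝒳) :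
    xPath μ P (k+1) x * P (x (Fin.last k)) j *
        Real.log (P (x (Fin.last k)) j /
          ((μ j / ∑ ℓ : 𝒳, if g ℓ = g j then μ ℓ else 0) *
            (yPath μ P g (k+2) (Fin.snoc (fun i => g (x i)) (g j)) /
              yPath μ P g (k+1) (fun i => g (x i)))))
      = xPath μ P (k+1) x * P (x (Fin.last k)) j * Real.log (P (x (Fin.last k)) j)
        - xPath μ P (k+1) x * P (x (Fin.last k)) j * Real.log (μ j)
        + xPath μ P (k+1) x * P (x (Fin.last k)) j
            * Real.log (∑ ℓ : 𝒳, if g ℓ = g j then μ ℓ else 0)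
        - xPath μ P (k+1) x * P (x (Fin.last k)) j
            * Real.log (yPath μ P g (k+2) (Fin.snoc (fun i => g (x i)) (g j)))
        + xPath μ P (k+1) x * P (x (Fin.last k)) j
            * Real.log (yPath μ P g (k+1) (fun i => g (x i))) := by
  set w := xPath μ P (k+1) x * P (x (Fin.last k)) j with hw
  rcases eq_or_lt_of_le (mul_nonneg (xPath_nonneg μ P hμ0 hP0 _ _) (hP0 _ _) : 0 ≤ w) with h0 | h0
  · rw [hw.trans h0.symm]; ring
  · have hP : 0 < P (x (Fin.last k)) j := by
      rcases mul_pos_iff.mp h0 with ⟨_, b⟩ | ⟨a, _⟩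
      · exact b
      · exact absurd a (not_lt.mpr (xPath_nonneg μ P hμ0 hP0 _ _))
    have hxp : 0 < xPath μ P (k+1) x := by
      rcases mul_pos_iff.mp h0 with ⟨a, _⟩ | ⟨_, b⟩
      · exact a
      · exact absurd b (not_lt.mpr (hP0 _ _))
    have hμj : 0 < μ j := mu_last_pos μ P hμ0 hP0 hμ2 k x j h0
    have hS : 0 < ∑ ℓ : 𝒳, if g ℓ = g j then μ ℓ else 0 := by
      calc (0:ℝ) < μ j := hμj
        _ ≤ _ := by
            refine Finset.single_le_sum (f := fun ℓ => if g ℓ = g j then μ ℓ else 0)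
              (fun ℓ _ => by split; exacts [hμ0 ℓ, le_refl 0]) (Finset.mem_univ j)
              |>.trans_eq' ?_
            rw [if_pos rfl]
    have hq1 : 0 < yPath μ P g (k+1) (fun i => g (x i)) :=
      lt_of_lt_of_le hxp (xPath_le_yPath μ P g hμ0 hP0 _ x)
    have hq2 : 0 < yPath μ P g (k+2) (Fin.snoc (fun i => g (x i)) (g j)) :=
      lt_of_lt_of_le h0 (xPathP_le_yPath_snoc μ P g hμ0 hP0 k x j)
    rw [Real.log_div (ne_of_gt hP) (by positivity), Real.log_mul (by positivity) (by positivity),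
      Real.log_div (ne_of_gt hμj) (ne_of_gt hS), Real.log_div (ne_of_gt hq2) (ne_of_gt hq1)]
    ring

lemma sum_w_F (μ : 𝒳 → ℝ) (P : Matrix 𝒳 𝒳 ℝ) (g : 𝒳 → 𝒴) (k : ℕ)
    (F : (Fin (k+1) → 𝒴) → 𝒴 → ℝ) :
    ∑ y : Fin (k+1) → 𝒴, ∑ b : 𝒴, yPath μ P g (k+2) (Fin.snoc y b) * F y b
      = ∑ x : Fin (k+1) → 𝒳, ∑ j : 𝒳,
          xPath μ P (k+1) x * P (x (Fin.last k)) j * F (fun i => g (x i)) (g j) := by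
  have step1 : ∀ (y : Fin (k+1) → 𝒴) (b : 𝒴),
      yPath μ P g (k+2) (Fin.snoc y b) * F y b
        = ∑ x : Fin (k+1) → 𝒳, ∑ j : 𝒳,
            if ((fun i => g (x i)) = y) ∧ (g j = b) then
              xPath μ P (k+1) x * P (x (Fin.last k)) j * F y b else 0 := by
    intro y b
    rw [yPath_snoc_eq, Finset.sum_mul]
    refine Finset.sum_congr rfl (fun x _ => ?_)
    rw [Finset.sum_mul]
    refine Finset.sum_congr rfl (fun j _ => ?_)
    rw [ite_mul, zero_mul]
    refine if_congr (by rw [funext_iff]) rfl rfl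
  calc ∑ y : Fin (k+1) → 𝒴, ∑ b : 𝒴, yPath μ P g (k+2) (Fin.snoc y b) * F y b
      = ∑ y : Fin (k+1) → 𝒴, ∑ b : 𝒴, ∑ x : Fin (k+1) → 𝒳, ∑ j : 𝒳,
          if ((fun i => g (x i)) = y) ∧ (g j = b) then
            xPath μ P (k+1) x * P (x (Fin.last k)) j * F y b else 0 :=
        Finset.sum_congr rfl (fun y _ => Finset.sum_congr rfl (fun b _ => step1 y b))
    _ = ∑ y : Fin (k+1) → 𝒴, ∑ x : Fin (k+1) → 𝒳, ∑ b : 𝒴, ∑ j : 𝒳,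
          if ((fun i => g (x i)) = y) ∧ (g j = b) then
            xPath μ P (k+1) x * P (x (Fin.last k)) j * F y b else 0 :=
        Finset.sum_congr rfl (fun y _ => Finset.sum_comm)
    _ = ∑ x : Fin (k+1) → 𝒳, ∑ y : Fin (k+1) → 𝒴, ∑ b : 𝒴, ∑ j : 𝒳,
          if ((fun i => g (x i)) = y) ∧ (g j = b) then
            xPath μ P (k+1) x * P (x (Fin.last k)) j * F y b else 0 := Finset.sum_comm
    _ = ∑ x : Fin (k+1) → 𝒳, ∑ y : Fin (k+1) → 𝒴, ∑ j : 𝒳, ∑ b : 𝒴,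
          if ((fun i => g (x i)) = y) ∧ (g j = b) then
            xPath μ P (k+1) x * P (x (Fin.last k)) j * F y b else 0 :=
        Finset.sum_congr rfl (fun x _ => Finset.sum_congr rfl (fun y _ => Finset.sum_comm))
    _ = ∑ x : Fin (k+1) → 𝒳, ∑ j : 𝒳, ∑ y : Fin (k+1) → 𝒴, ∑ b : 𝒴,
          if ((fun i => g (x i)) = y) ∧ (g j = b) then
            xPath μ P (k+1) x * P (x (Fin.last k)) j * F y b else 0 :=
        Finset.sum_congr rfl (fun x _ => Finset.sum_comm)
    _ = ∑ x : Fin (k+1) → 𝒳, ∑ j : 𝒳,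
          xPath μ P (k+1) x * P (x (Fin.last k)) j * F (fun i => g (x i)) (g j) := by
        refine Finset.sum_congr rfl (fun x _ => Finset.sum_congr rfl (fun j _ => ?_))
        rw [Finset.sum_comm]
        simp only [ite_and, Finset.sum_ite_eq, Finset.sum_ite_eq', Finset.mem_univ, if_true]

lemma negMulLog_mul_split (a b : ℝ) (ha : 0 ≤ a) (hb : 0 ≤ b) :
    Real.negMulLog (a * b) = -(a * b * Real.log a) - a * b * Real.log b := by
  rcases eq_or_lt_of_le ha with h | h
  · rw [← h]; simp [Real.negMulLog]
  rcases eq_or_lt_of_le hb with h' | h'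
  · rw [← h']; simp [Real.negMulLog]
  rw [Real.negMulLog, Real.log_mul (ne_of_gt h) (ne_of_gt h')]
  ring

theorem stmt15' (P : Matrix 𝒳 𝒳 ℝ) (hP0 : ∀ i j, 0 ≤ P i j) (hP1 : ∀ i, ∑ j : 𝒳, P i j = 1)
    (μ : 𝒳 → ℝ) (hμ0 : ∀ x, 0 ≤ μ x) (hμ1 : ∑ x : 𝒳, μ x = 1)
    (hμ2 : ∀ j, ∑ i : 𝒳, μ i * P i j = μ j) (g : 𝒳 → 𝒴) (k : ℕ) :
    (∑ x : Fin (k + 1) → 𝒳, ∑ j : 𝒳,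
      xPath μ P (k + 1) x * P (x (Fin.last k)) j *
        Real.log (P (x (Fin.last k)) j /
          ((μ j / ∑ ℓ : 𝒳, if g ℓ = g j then μ ℓ else 0) *
            (yPath μ P g (k + 2) (Fin.snoc (fun i => g (x i)) (g j)) /
              yPath μ P g (k + 1) (fun i => g (x i))))))
      = predCost μ P g k := by
  -- split the left side into five sums
  have hsplit : (∑ x : Fin (k + 1) → 𝒳, ∑ j : 𝒳,
      xPath μ P (k + 1) x * P (x (Fin.last k)) j *
        Real.log (P (x (Fin.last k)) j /
          ((μ j / ∑ ℓ : 𝒳, if g ℓ = g j then μ ℓ else 0) *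
            (yPath μ P g (k + 2) (Fin.snoc (fun i => g (x i)) (g j)) /
              yPath μ P g (k + 1) (fun i => g (x i))))))
      = (∑ x : Fin (k+1) → 𝒳, ∑ j : 𝒳, xPath μ P (k+1) x * P (x (Fin.last k)) j
            * Real.log (P (x (Fin.last k)) j))
        - (∑ x : Fin (k+1) → 𝒳, ∑ j : 𝒳, xPath μ P (k+1) x * P (x (Fin.last k)) j
            * Real.log (μ j))
        + (∑ x : Fin (k+1) → 𝒳, ∑ j : 𝒳, xPath μ P (k+1) x * P (x (Fin.last k)) j
            * Real.log (∑ ℓ : 𝒳, if g ℓ = g j then μ ℓ else 0))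
        - (∑ x : Fin (k+1) → 𝒳, ∑ j : 𝒳, xPath μ P (k+1) x * P (x (Fin.last k)) j
            * Real.log (yPath μ P g (k+2) (Fin.snoc (fun i => g (x i)) (g j))))
        + (∑ x : Fin (k+1) → 𝒳, ∑ j : 𝒳, xPath μ P (k+1) x * P (x (Fin.last k)) j
            * Real.log (yPath μ P g (k+1) (fun i => g (x i)))) := by
    rw [Finset.sum_congr rfl (fun x _ => Finset.sum_congr rfl
      (fun j _ => pointwise_decomp μ P g hμ0 hP0 hμ2 k x j))]
    simp only [Finset.sum_add_distrib, Finset.sum_sub_distrib]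
  rw [hsplit]
  -- Term 1
  have E1 : (∑ x : Fin (k+1) → 𝒳, ∑ j : 𝒳, xPath μ P (k+1) x * P (x (Fin.last k)) j
        * Real.log (P (x (Fin.last k)) j))
      = ∑ i : 𝒳, ∑ j : 𝒳, μ i * (P i j * Real.log (P i j)) := by
    have h := lastMarg μ P hμ2 k (fun i => ∑ j : 𝒳, P i j * Real.log (P i j))
    calc (∑ x : Fin (k+1) → 𝒳, ∑ j : 𝒳, xPath μ P (k+1) x * P (x (Fin.last k)) j
          * Real.log (P (x (Fin.last k)) j))
        = ∑ x : Fin (k+1) → 𝒳, xPath μ P (k+1) x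
            * ∑ j : 𝒳, P (x (Fin.last k)) j * Real.log (P (x (Fin.last k)) j) := by
          refine Finset.sum_congr rfl (fun x _ => ?_)
          rw [Finset.mul_sum]
          exact Finset.sum_congr rfl (fun j _ => by ring)
      _ = ∑ i : 𝒳, μ i * ∑ j : 𝒳, P i j * Real.log (P i j) := h
      _ = ∑ i : 𝒳, ∑ j : 𝒳, μ i * (P i j * Real.log (P i j)) :=
          Finset.sum_congr rfl (fun i _ => Finset.mul_sum _ _ _)
  -- Term 2
  have E2 : (∑ x : Fin (k+1) → 𝒳, ∑ j : 𝒳, xPath μ P (k+1) x * P (x (Fin.last k)) j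
        * Real.log (μ j))
      = ∑ j : 𝒳, μ j * Real.log (μ j) := by
    rw [Finset.sum_comm]
    refine Finset.sum_congr rfl (fun j _ => ?_)
    calc ∑ x : Fin (k+1) → 𝒳, xPath μ P (k+1) x * P (x (Fin.last k)) j * Real.log (μ j)
        = (∑ x : Fin (k+1) → 𝒳, xPath μ P (k+1) x * P (x (Fin.last k)) j) * Real.log (μ j) :=
          (Finset.sum_mul _ _ _).symm
      _ = μ j * Real.log (μ j) := by
          rw [(lastMarg μ P hμ2 k (fun i => P i j)).trans (hμ2 j)]
  -- Term 3
  have E3 : (∑ x : Fin (k+1) → 𝒳, ∑ j : 𝒳, xPath μ P (k+1) x * P (x (Fin.last k)) j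
        * Real.log (∑ ℓ : 𝒳, if g ℓ = g j then μ ℓ else 0))
      = ∑ b : 𝒴, (∑ ℓ : 𝒳, if g ℓ = b then μ ℓ else 0) * Real.log (∑ ℓ : 𝒳, if g ℓ = b then μ ℓ else 0) := by
    rw [← sum_w_F μ P g k (fun y b => Real.log (∑ ℓ : 𝒳, if g ℓ = b then μ ℓ else 0)), Finset.sum_comm]
    refine Finset.sum_congr rfl (fun b _ => ?_)
    rw [← Finset.sum_mul, yPath_marg_first μ P g hμ2 k b]
  -- Term 4
  have E4 : (∑ x : Fin (k+1) → 𝒳, ∑ j : 𝒳, xPath μ P (k+1) x * P (x (Fin.last k)) j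
        * Real.log (yPath μ P g (k+2) (Fin.snoc (fun i => g (x i)) (g j))))
      = ∑ y : Fin (k+1) → 𝒴, ∑ b : 𝒴, yPath μ P g (k+2) (Fin.snoc y b)
          * Real.log (yPath μ P g (k+2) (Fin.snoc y b)) :=
    (sum_w_F μ P g k (fun y b => Real.log (yPath μ P g (k+2) (Fin.snoc y b)))).symm
  -- Term 5
  have E5 : (∑ x : Fin (k+1) → 𝒳, ∑ j : 𝒳, xPath μ P (k+1) x * P (x (Fin.last k)) j
        * Real.log (yPath μ P g (k+1) (fun i => g (x i))))
      = ∑ y : Fin (k+1) → 𝒴, yPath μ P g (k+1) y * Real.log (yPath μ P g (k+1) y) := by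
    rw [← sum_w_F μ P g k (fun y b => Real.log (yPath μ P g (k+1) y))]
    refine Finset.sum_congr rfl (fun y _ => ?_)
    rw [← Finset.sum_mul, yPath_marg_last μ P g hP1 k y]
  rw [E1, E2, E3, E4, E5]
  -- now compute the right side
  unfold predCost mutInfPMF entPMF margFst margSnd
  rw [Fintype.sum_prod_type (f := fun q : 𝒳 × 𝒳 => Real.negMulLog (μ q.1 * P q.1 q.2)),
    Fintype.sum_prod_type (f := fun q : 𝒴 × (Fin (k+1) → 𝒴) =>
      Real.negMulLog (yPath μ P g (k + 2) (Fin.snoc q.2 q.1)))]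
  have R1 : ∑ a : 𝒳, Real.negMulLog (∑ b : 𝒳, μ a * P a b)
      = ∑ a : 𝒳, Real.negMulLog (μ a) := by
    refine Finset.sum_congr rfl (fun a _ => ?_)
    rw [← Finset.mul_sum, hP1, mul_one]
  have R2 : ∑ b : 𝒳, Real.negMulLog (∑ a : 𝒳, μ a * P a b)
      = ∑ b : 𝒳, Real.negMulLog (μ b) := by
    refine Finset.sum_congr rfl (fun b _ => ?_)
    rw [hμ2]
  have R3 : ∑ a : 𝒳, ∑ b : 𝒳, Real.negMulLog (μ a * P a b)
      = (∑ a : 𝒳, Real.negMulLog (μ a))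
        - ∑ a : 𝒳, ∑ b : 𝒳, μ a * (P a b * Real.log (P a b)) := by
    rw [← Finset.sum_sub_distrib]
    refine Finset.sum_congr rfl (fun a _ => ?_)
    calc ∑ b : 𝒳, Real.negMulLog (μ a * P a b)
        = ∑ b : 𝒳, (-(μ a * P a b * Real.log (μ a)) - μ a * (P a b * Real.log (P a b))) := by
          refine Finset.sum_congr rfl (fun b _ => ?_)
          rw [negMulLog_mul_split (μ a) (P a b) (hμ0 a) (hP0 a b)]
          ring
      _ = (∑ b : 𝒳, -(μ a * P a b * Real.log (μ a)))
            - ∑ b : 𝒳, μ a * (P a b * Real.log (P a b)) := Finset.sum_sub_distrib _ _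
      _ = Real.negMulLog (μ a) - ∑ b : 𝒳, μ a * (P a b * Real.log (P a b)) := by
          congr 1
          calc ∑ b : 𝒳, -(μ a * P a b * Real.log (μ a))
              = ∑ b : 𝒳, P a b * -(μ a * Real.log (μ a)) :=
                Finset.sum_congr rfl (fun b _ => by ring)
            _ = (∑ b : 𝒳, P a b) * -(μ a * Real.log (μ a)) := (Finset.sum_mul _ _ _).symm
            _ = Real.negMulLog (μ a) := by rw [hP1, one_mul, Real.negMulLog]; ring
  have R4 : ∑ a : 𝒴, Real.negMulLog (∑ y : Fin (k+1) → 𝒴, yPath μ P g (k+2) (Fin.snoc y a))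
      = -∑ b : 𝒴, (∑ ℓ : 𝒳, if g ℓ = b then μ ℓ else 0) * Real.log (∑ ℓ : 𝒳, if g ℓ = b then μ ℓ else 0) := by
    rw [← Finset.sum_neg_distrib]
    refine Finset.sum_congr rfl (fun b _ => ?_)
    rw [yPath_marg_first μ P g hμ2 k b, Real.negMulLog]
    ring
  have R5 : ∑ y : Fin (k+1) → 𝒴, Real.negMulLog (∑ b : 𝒴, yPath μ P g (k+2) (Fin.snoc y b))
      = -∑ y : Fin (k+1) → 𝒴, yPath μ P g (k+1) y * Real.log (yPath μ P g (k+1) y) := by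
    rw [← Finset.sum_neg_distrib]
    refine Finset.sum_congr rfl (fun y _ => ?_)
    rw [yPath_marg_last μ P g hP1 k y, Real.negMulLog]
    ring
  have R6 : ∑ b : 𝒴, ∑ y : Fin (k+1) → 𝒴, Real.negMulLog (yPath μ P g (k+2) (Fin.snoc y b))
      = -∑ y : Fin (k+1) → 𝒴, ∑ b : 𝒴, yPath μ P g (k+2) (Fin.snoc y b)
          * Real.log (yPath μ P g (k+2) (Fin.snoc y b)) := by
    rw [Finset.sum_comm, ← Finset.sum_neg_distrib]
    refine Finset.sum_congr rfl (fun y _ => ?_)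
    rw [← Finset.sum_neg_distrib]
    refine Finset.sum_congr rfl (fun b _ => ?_)
    rw [Real.negMulLog]
    ring
  have R7 : ∑ a : 𝒳, Real.negMulLog (μ a) = -∑ j : 𝒳, μ j * Real.log (μ j) := by
    rw [← Finset.sum_neg_distrib]
    refine Finset.sum_congr rfl (fun a _ => ?_)
    rw [Real.negMulLog]
    ring
  rw [R1, R2, R3, R4, R5, R6, R7]
  ring

end AuxLemmas

end MarkovAggregation

/-- let X be an irreducible, aperiodic, stationary first-order Markov chain
with transition matrix P and invariant distribution μ, and let Y^{(k+1)} be the stationary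
(k+1)-th order Markov approximation of the projection Y, with transition matrix
Q_{i_1..i_{k+1}→j} = p_{Y_{k+2}|Y_1^{k+1}}(j | i_1..i_{k+1}).  Define the μ-lifting X' of
Y^{(k+1)} as the stationary (k+1)-th order chain on 𝒳 with transition matrix
P̂_{i_1..i_{k+1}→j} = (μ_j / ∑_{ℓ ∈ g⁻¹(g(j))} μ_ℓ) Q_{g(i_1)..g(i_{k+1})→g(j)}.
Viewing X as the (k+1)-th order chain with P̃_{i_1..i_{k+1}→j} = P_{i_{k+1}→j}, the KL divergence
rate between X and X' (given by the explicit formula for KLDR between (k+1)-th order chains)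
equals the predictability cost: D̄(X‖X') = Δ_P^{k+1}(X, g). -/
theorem stmt15 {𝒳 𝒴 : Type*} [Fintype 𝒳] [DecidableEq 𝒳] [Fintype 𝒴] [DecidableEq 𝒴]
    (P : Matrix 𝒳 𝒳 ℝ) (hP0 : ∀ i j, 0 ≤ P i j) (hP1 : ∀ i, ∑ j : 𝒳, P i j = 1)
    (hprim : PrimitiveMatrix P)
    (μ : 𝒳 → ℝ) (hμ0 : ∀ x, 0 ≤ μ x) (hμ1 : ∑ x : 𝒳, μ x = 1)
    (hμ2 : ∀ j, ∑ i : 𝒳, μ i * P i j = μ j) (g : 𝒳 → 𝒴) (k : ℕ) :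
    (∑ x : Fin (k + 1) → 𝒳, ∑ j : 𝒳,
      xPath μ P (k + 1) x * P (x (Fin.last k)) j *
        Real.log (P (x (Fin.last k)) j /
          ((μ j / ∑ ℓ : 𝒳, if g ℓ = g j then μ ℓ else 0) *
            (yPath μ P g (k + 2) (Fin.snoc (fun i => g (x i)) (g j)) /
              yPath μ P g (k + 1) (fun i => g (x i))))))
      = predCost μ P g k :=
  stmt15' P hP0 hP1 μ hμ0 hμ1 hμ2 g k
end
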